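/- arXiv:2205.14784 — 4 statements merged into one kernel-verified Lean document; each statement's English description precedes it below -/
import Mathlib

section
/- Under the gossip model setup, for all t ∈ ℕ the expectation of the regular agents' state vector satisfies E{X(t)} = (1 − λ1)^t ηη^T X(0) + (1/λ1)[1 − (1 − λ1)^t] ηη^T R̄ z^s + (1 − λ2)^t ξξ^T X(0) + (1/λ2)[1 − (1 − λ2)^t] ξξ^T R̄ z^s + (1 − λ3)^t Γ X(0) + (1/λ3)[1 − (1 − λ3)^t] Γ R̄ z^s, where Γ := I_{r0 n} − ηη^T − ξξ^T is the orthogonal projection onto the orthogonal complement of span{η, ξ}. -/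
open MeasureTheory ProbabilityTheory Matrix Finset Filter

set_option autoImplicit false
set_option linter.unusedVariables false

noncomputable section

/-- Indicator vector (in regular coordinates) of agent `i`; zero if `i` is stubborn. -/
def regInd (nr ns : ℕ) (i : Fin (nr + ns)) : Fin nr → ℝ :=
  fun k => if (k : ℕ) = (i : ℕ) then 1 else 0

/-- Indicator vector (in stubborn coordinates) of agent `j`; zero if `j` is regular. -/
def stubInd (nr ns : ℕ) (j : Fin (nr + ns)) : Fin ns → ℝ :=
  fun k => if (k : ℕ) + nr = (j : ℕ) then 1 else 0

/-- The random update matrix Q determined by the selected edge `e` (with `e.1 < e.2`). -/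
def Qmat (nr ns : ℕ) (e : Fin (nr + ns) × Fin (nr + ns)) : Matrix (Fin nr) (Fin nr) ℝ :=
  1 - (2⁻¹ : ℝ) • Matrix.vecMulVec (regInd nr ns e.1 - regInd nr ns e.2)
      (regInd nr ns e.1 - regInd nr ns e.2)

/-- The random update matrix R determined by the selected edge `e` (with `e.1 < e.2`). -/
def Rmat (nr ns : ℕ) (e : Fin (nr + ns) × Fin (nr + ns)) : Matrix (Fin nr) (Fin ns) ℝ :=
  (2⁻¹ : ℝ) • Matrix.vecMulVec (regInd nr ns e.1) (stubInd nr ns e.2)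

/-- Total edge weight α = Σ_i Σ_{j>i} a_{ij}. -/
def alphaW (nr ns : ℕ) (A : Matrix (Fin (nr + ns)) (Fin (nr + ns)) ℝ) : ℝ :=
  ∑ i : Fin (nr + ns), ∑ j : Fin (nr + ns), if (i : ℕ) < (j : ℕ) then A i j else 0

/-- The regular-to-stubborn weight matrix M̃. -/
def MtilM (nr ns : ℕ) (A : Matrix (Fin (nr + ns)) (Fin (nr + ns)) ℝ) :
    Matrix (Fin nr) (Fin ns) ℝ :=
  Matrix.of fun i j => A (Fin.castAdd ns i) (Fin.natAdd nr j)

/-- η = 1/√(r₀n). -/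
def etaV (nr : ℕ) : Fin nr → ℝ := fun _ => 1 / Real.sqrt nr

/-- ξ = [1; -1]/√(r₀n). -/
def xiV (nr : ℕ) : Fin nr → ℝ :=
  fun k => (if (k : ℕ) < nr / 2 then 1 else -1) / Real.sqrt nr

/-- Projection ηηᵀ x. -/
def projEta (nr : ℕ) (x : Fin nr → ℝ) : Fin nr → ℝ := (etaV nr ⬝ᵥ x) • etaV nr

/-- Projection ξξᵀ x. -/
def projXi (nr : ℕ) (x : Fin nr → ℝ) : Fin nr → ℝ := (xiV nr ⬝ᵥ x) • xiV nr

/-- Projection Γ x = x - ηηᵀ x - ξξᵀ x. -/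
def projGamma (nr : ℕ) (x : Fin nr → ℝ) : Fin nr → ℝ := x - projEta nr x - projXi nr x

/-- Projection x⊥ = x - ηηᵀ x. -/
def projPerp (nr : ℕ) (x : Fin nr → ℝ) : Fin nr → ℝ := x - projEta nr x

/-- Squared Euclidean norm. -/
def normSq {m : ℕ} (x : Fin m → ℝ) : ℝ := ∑ i, x i ^ 2

/-- Euclidean norm. -/
def enormV {m : ℕ} (x : Fin m → ℝ) : ℝ := Real.sqrt (normSq x)

/-- #{i : |x_i - y_i| > ε c_x}. -/
def Scard {m : ℕ} (x y : Fin m → ℝ) (ε cx : ℝ) : ℕ :=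
  (Finset.univ.filter fun i : Fin m => ε * cx < |x i - y i|).card

set_option maxHeartbeats 1600000
-- ======== auxiliary lemmas ========

lemma regInd_dot (nr ns : ℕ) (i : Fin (nr+ns)) (x : Fin nr → ℝ) :
    regInd nr ns i ⬝ᵥ x = if h : (i:ℕ) < nr then x ⟨i, h⟩ else 0 := by
  unfold regInd dotProduct
  split_ifs with h
  · rw [Finset.sum_eq_single (⟨(i:ℕ), h⟩ : Fin nr)]
    · simp
    · intro k _ hk
      have : (k:ℕ) ≠ (i:ℕ) := fun hc => hk (Fin.ext hc)
      simp [this]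
    · simp
  · apply Finset.sum_eq_zero; intro k _
    have : (k:ℕ) ≠ (i:ℕ) := by omega
    simp [this]

lemma regInd_at (nr ns : ℕ) (i : Fin (nr+ns)) (k : Fin nr) :
    regInd nr ns i k = if i = Fin.castAdd ns k then 1 else 0 := by
  show (if (k:ℕ) = (i:ℕ) then (1:ℝ) else 0) = _
  by_cases h : (k:ℕ) = (i:ℕ)
  · have hik : i = Fin.castAdd ns k := Fin.ext (by simp only [Fin.coe_castAdd]; omega)
    rw [if_pos h, if_pos hik]
  · have hik : i ≠ Fin.castAdd ns k := fun hc => h (by rw [hc]; rfl)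
    rw [if_neg h, if_neg (fun hc => hik hc)]

lemma card_filter_lt (nr m : ℕ) (hm : m ≤ nr) :
    ∑ l : Fin nr, (if (l:ℕ) < m then (1:ℝ) else 0) = m := by
  rw [Fin.sum_univ_eq_sum_range (fun i => if i < m then (1:ℝ) else 0), ← Finset.sum_filter]
  have : (Finset.range nr).filter (fun i => i < m) = Finset.range m := by
    ext i; simp; omega
  rw [this, Finset.sum_const, Finset.card_range]; simp

lemma card_filter_not_lt (nr m : ℕ) (hm : m ≤ nr) :
    ∑ l : Fin nr, (if ¬ (l:ℕ) < m then (1:ℝ) else 0) = (nr:ℝ) - m := by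
  have hterm : ∀ l : Fin nr, (if ¬ (l:ℕ) < m then (1:ℝ) else 0)
      = 1 - (if (l:ℕ) < m then (1:ℝ) else 0) := by
    intro l; split_ifs <;> simp_all
  rw [Finset.sum_congr rfl (fun l _ => hterm l), Finset.sum_sub_distrib,
    card_filter_lt nr m hm, Finset.sum_const, Finset.card_univ, Fintype.card_fin,
    nsmul_eq_mul, mul_one]

lemma vecMulVec_mulVec' {n m : ℕ} (u : Fin n → ℝ) (v : Fin m → ℝ) (y : Fin m → ℝ) :
    Matrix.vecMulVec u v *ᵥ y = (v ⬝ᵥ y) • u := by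
  funext k
  simp only [Matrix.mulVec, Matrix.vecMulVec_apply, dotProduct, Pi.smul_apply, smul_eq_mul]
  rw [Finset.sum_mul]
  apply Finset.sum_congr rfl; intro j _; ring

lemma stub_dot_natAdd (nr ns : ℕ) (s : Fin ns) (zs : Fin ns → ℝ) :
    stubInd nr ns (Fin.natAdd nr s) ⬝ᵥ zs = zs s := by
  unfold stubInd dotProduct
  rw [Finset.sum_eq_single s]
  · simp [Fin.natAdd, add_comm]
  · intro b _ hb
    have hbv : (b:ℕ) ≠ (s:ℕ) := fun hc => hb (Fin.ext hc)
    simp only [Fin.coe_natAdd, ite_mul, one_mul, zero_mul, ite_eq_right_iff]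
    intro hc; exact absurd hc (by omega)
  · simp

lemma stub_dot_castAdd (nr ns : ℕ) (l : Fin nr) (zs : Fin ns → ℝ) :
    stubInd nr ns (Fin.castAdd ns l) ⬝ᵥ zs = 0 := by
  unfold stubInd dotProduct
  apply Finset.sum_eq_zero; intro b _
  have hl : (l:ℕ) < nr := l.isLt
  simp only [Fin.coe_castAdd, ite_mul, one_mul, zero_mul, ite_eq_right_iff]
  intro hc; exact absurd hc (by omega)

lemma Rv_eq (nr ns : ℕ) (A : Matrix (Fin (nr+ns)) (Fin (nr+ns)) ℝ) (zs : Fin ns → ℝ) :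
    ∑ v : Fin (nr+ns) × Fin (nr+ns), (if (v.1:ℕ) < (v.2:ℕ) then A v.1 v.2 else 0) •
      ((stubInd nr ns v.2 ⬝ᵥ zs) • regInd nr ns v.1) = MtilM nr ns A *ᵥ zs := by
  funext k
  rw [Finset.sum_apply, Fintype.sum_prod_type]
  set kh : Fin (nr+ns) := Fin.castAdd ns k with hkh
  have hklt : (kh : ℕ) < nr := k.isLt
  have e1 : ∀ i j : Fin (nr+ns),
      ((if (i:ℕ)<(j:ℕ) then A i j else 0) • ((stubInd nr ns j ⬝ᵥ zs) • regInd nr ns i)) k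
      = if i = kh then (if (i:ℕ)<(j:ℕ) then A i j else 0) * (stubInd nr ns j ⬝ᵥ zs) else 0 := by
    intro i j
    simp only [Pi.smul_apply, smul_eq_mul, regInd_at nr ns i k, ← hkh]
    split_ifs <;> ring
  simp only [e1]
  have e2 : ∀ i : Fin (nr+ns),
      (∑ j : Fin (nr+ns), if i = kh then (if (i:ℕ)<(j:ℕ) then A i j else 0) * (stubInd nr ns j ⬝ᵥ zs) else 0)
      = if i = kh then ∑ j : Fin (nr+ns), (if (kh:ℕ)<(j:ℕ) then A kh j else 0) * (stubInd nr ns j ⬝ᵥ zs) else 0 := by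
    intro i
    split_ifs with h
    · subst h; rfl
    · simp
  rw [Finset.sum_congr rfl (fun i _ => e2 i), Finset.sum_ite_eq' _ kh, if_pos (Finset.mem_univ _)]
  rw [Fin.sum_univ_add]
  have hz : (∑ l : Fin nr, (if (kh:ℕ) < ((Fin.castAdd ns l : Fin (nr+ns)):ℕ) then A kh (Fin.castAdd ns l) else 0) * (stubInd nr ns (Fin.castAdd ns l) ⬝ᵥ zs)) = 0 := by
    apply Finset.sum_eq_zero; intro l _
    rw [stub_dot_castAdd, mul_zero]
  rw [hz, zero_add]
  have ho : ∀ s : Fin ns,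
      (if (kh:ℕ) < ((Fin.natAdd nr s : Fin (nr+ns)):ℕ) then A kh (Fin.natAdd nr s) else 0) * (stubInd nr ns (Fin.natAdd nr s) ⬝ᵥ zs)
      = A kh (Fin.natAdd nr s) * zs s := by
    intro s
    rw [stub_dot_natAdd, if_pos (by simp only [Fin.coe_natAdd]; omega)]
  rw [Finset.sum_congr rfl (fun s _ => ho s)]
  simp [MtilM, Matrix.mulVec, dotProduct, hkh]

-- orthonormality
lemma eta_dot_eta (nr : ℕ) (h : 0 < nr) : etaV nr ⬝ᵥ etaV nr = 1 := by
  unfold etaV dotProduct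
  have hnn : (0:ℝ) ≤ (nr:ℝ) := Nat.cast_nonneg nr
  have hne : ((nr:ℕ):ℝ) ≠ 0 := by exact_mod_cast Nat.pos_iff_ne_zero.mp h
  have hterm : ∀ l : Fin nr, (1 / Real.sqrt nr) * (1 / Real.sqrt nr) = 1 / (nr:ℝ) := by
    intro l
    rw [div_mul_div_comm, mul_one, Real.mul_self_sqrt hnn]
  rw [Finset.sum_congr rfl (fun l _ => hterm l), Finset.sum_const, Finset.card_univ,
    Fintype.card_fin, nsmul_eq_mul]
  field_simp

lemma xi_dot_xi (nr : ℕ) (h : 0 < nr) : xiV nr ⬝ᵥ xiV nr = 1 := by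
  unfold xiV dotProduct
  have hnn : (0:ℝ) ≤ (nr:ℝ) := Nat.cast_nonneg nr
  have hne : ((nr:ℕ):ℝ) ≠ 0 := by exact_mod_cast Nat.pos_iff_ne_zero.mp h
  have hterm : ∀ l : Fin nr,
      ((if (l:ℕ) < nr/2 then (1:ℝ) else -1) / Real.sqrt nr) *
        ((if (l:ℕ) < nr/2 then (1:ℝ) else -1) / Real.sqrt nr) = 1 / (nr:ℝ) := by
    intro l
    rw [div_mul_div_comm, Real.mul_self_sqrt hnn]
    split_ifs <;> norm_num
  rw [Finset.sum_congr rfl (fun l _ => hterm l), Finset.sum_const, Finset.card_univ,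
    Fintype.card_fin, nsmul_eq_mul]
  field_simp

lemma eta_dot_xi (nr : ℕ) (heven : Even nr) (h : 0 < nr) : etaV nr ⬝ᵥ xiV nr = 0 := by
  obtain ⟨m, hm⟩ := heven
  have hm2 : nr / 2 = m := by omega
  have hmnr : m ≤ nr := by omega
  unfold etaV xiV dotProduct
  have hnn : (0:ℝ) ≤ (nr:ℝ) := Nat.cast_nonneg nr
  have hterm : ∀ l : Fin nr,
      (1 / Real.sqrt nr) * ((if (l:ℕ) < nr/2 then (1:ℝ) else -1) / Real.sqrt nr)
      = (if (l:ℕ) < m then (1:ℝ) else 0) / (nr:ℝ) - (if ¬ (l:ℕ) < m then (1:ℝ) else 0) / (nr:ℝ) := by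
    intro l
    rw [hm2, div_mul_div_comm, Real.mul_self_sqrt hnn]
    split_ifs <;> simp [neg_div]
  rw [Finset.sum_congr rfl (fun l _ => hterm l), Finset.sum_sub_distrib,
    ← Finset.sum_div, ← Finset.sum_div, card_filter_lt nr m hmnr, card_filter_not_lt nr m hmnr]
  have : ((nr:ℕ):ℝ) - (m:ℝ) = (m:ℝ) := by
    rw [hm]; push_cast; ring
  rw [this, sub_self]

lemma xi_dot_eta (nr : ℕ) (heven : Even nr) (h : 0 < nr) : xiV nr ⬝ᵥ etaV nr = 0 := by
  rw [dotProduct_comm]; exact eta_dot_xi nr heven h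

-- projection algebra
lemma projEta_add (nr : ℕ) (u v : Fin nr → ℝ) :
    projEta nr (u + v) = projEta nr u + projEta nr v := by
  unfold projEta; rw [dotProduct_add, add_smul]

lemma projEta_smul (nr : ℕ) (a : ℝ) (u : Fin nr → ℝ) :
    projEta nr (a • u) = a • projEta nr u := by
  unfold projEta; rw [dotProduct_smul, smul_assoc]

lemma projXi_add (nr : ℕ) (u v : Fin nr → ℝ) :
    projXi nr (u + v) = projXi nr u + projXi nr v := by
  unfold projXi; rw [dotProduct_add, add_smul]

lemma projXi_smul (nr : ℕ) (a : ℝ) (u : Fin nr → ℝ) :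
    projXi nr (a • u) = a • projXi nr u := by
  unfold projXi; rw [dotProduct_smul, smul_assoc]

lemma projEta_projEta (nr : ℕ) (h : 0 < nr) (y : Fin nr → ℝ) :
    projEta nr (projEta nr y) = projEta nr y := by
  unfold projEta
  rw [dotProduct_smul, eta_dot_eta nr h, smul_eq_mul, mul_one]

lemma projEta_projXi (nr : ℕ) (heven : Even nr) (h : 0 < nr) (y : Fin nr → ℝ) :
    projEta nr (projXi nr y) = 0 := by
  unfold projEta projXi
  rw [dotProduct_smul, eta_dot_xi nr heven h, smul_eq_mul, mul_zero, zero_smul]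

lemma projXi_projEta (nr : ℕ) (heven : Even nr) (h : 0 < nr) (y : Fin nr → ℝ) :
    projXi nr (projEta nr y) = 0 := by
  unfold projEta projXi
  rw [dotProduct_smul, xi_dot_eta nr heven h, smul_eq_mul, mul_zero, zero_smul]

lemma projXi_projXi (nr : ℕ) (h : 0 < nr) (y : Fin nr → ℝ) :
    projXi nr (projXi nr y) = projXi nr y := by
  unfold projXi
  rw [dotProduct_smul, xi_dot_xi nr h, smul_eq_mul, mul_one]

lemma projEta_projGamma (nr : ℕ) (heven : Even nr) (h : 0 < nr) (y : Fin nr → ℝ) :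
    projEta nr (projGamma nr y) = 0 := by
  unfold projGamma
  rw [sub_eq_add_neg, sub_eq_add_neg, projEta_add, projEta_add,
    show -projEta nr y = (-1:ℝ) • projEta nr y by simp,
    show -projXi nr y = (-1:ℝ) • projXi nr y by simp,
    projEta_smul, projEta_smul, projEta_projEta nr h, projEta_projXi nr heven h]
  simp

lemma projXi_projGamma (nr : ℕ) (heven : Even nr) (h : 0 < nr) (y : Fin nr → ℝ) :
    projXi nr (projGamma nr y) = 0 := by
  unfold projGamma
  rw [sub_eq_add_neg, sub_eq_add_neg, projXi_add, projXi_add,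
    show -projEta nr y = (-1:ℝ) • projEta nr y by simp,
    show -projXi nr y = (-1:ℝ) • projXi nr y by simp,
    projXi_smul, projXi_smul, projXi_projEta nr heven h, projXi_projXi nr h]
  simp

lemma projGamma_add (nr : ℕ) (u v : Fin nr → ℝ) :
    projGamma nr (u + v) = projGamma nr u + projGamma nr v := by
  unfold projGamma; rw [projEta_add, projXi_add]; abel

lemma projGamma_smul (nr : ℕ) (a : ℝ) (u : Fin nr → ℝ) :
    projGamma nr (a • u) = a • projGamma nr u := by
  unfold projGamma; rw [projEta_smul, projXi_smul, smul_sub, smul_sub]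

lemma projGamma_projEta (nr : ℕ) (heven : Even nr) (h : 0 < nr) (y : Fin nr → ℝ) :
    projGamma nr (projEta nr y) = 0 := by
  unfold projGamma
  rw [projEta_projEta nr h, projXi_projEta nr heven h]
  simp

lemma projGamma_projXi (nr : ℕ) (heven : Even nr) (h : 0 < nr) (y : Fin nr → ℝ) :
    projGamma nr (projXi nr y) = 0 := by
  unfold projGamma
  rw [projEta_projXi nr heven h, projXi_projXi nr h]
  simp

lemma projGamma_projGamma (nr : ℕ) (heven : Even nr) (h : 0 < nr) (y : Fin nr → ℝ) :
    projGamma nr (projGamma nr y) = projGamma nr y := by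
  conv_lhs => rw [projGamma]
  rw [projEta_projGamma nr heven h, projXi_projGamma nr heven h]
  simp

lemma proj_decomp (nr : ℕ) (y : Fin nr → ℝ) :
    projEta nr y + projXi nr y + projGamma nr y = y := by
  unfold projGamma; abel

lemma projEta_zero (nr : ℕ) : projEta nr (0 : Fin nr → ℝ) = 0 := by
  unfold projEta; rw [dotProduct_zero, zero_smul]

lemma projXi_zero (nr : ℕ) : projXi nr (0 : Fin nr → ℝ) = 0 := by
  unfold projXi; rw [dotProduct_zero, zero_smul]

lemma projGamma_zero (nr : ℕ) : projGamma nr (0 : Fin nr → ℝ) = 0 := by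
  unfold projGamma; rw [projEta_zero, projXi_zero]; simp

-- geometric-sum stepping
lemma geom_pair (n : ℕ) (l : ℝ) (t : ℕ) (p q : Fin n → ℝ) (h : l ≠ 0 ∨ q = 0) :
    (1-l) • ((1-l)^t • p + ((1/l)*(1-(1-l)^t)) • q) + q
      = (1-l)^(t+1) • p + ((1/l)*(1-(1-l)^(t+1))) • q := by
  rw [smul_add, smul_smul, smul_smul, ← pow_succ']
  rcases h with h | h
  · have hq : ((1-l) * ((1/l)*(1-(1-l)^t))) • q + q = ((1/l)*(1-(1-l)^(t+1))) • q := by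
      calc ((1-l) * ((1/l)*(1-(1-l)^t))) • q + q
          = ((1-l) * ((1/l)*(1-(1-l)^t)) + 1) • q := by rw [add_smul, one_smul]
        _ = ((1/l)*(1-(1-l)^(t+1))) • q := by
            congr 1; field_simp; ring
    rw [add_assoc, hq]
  · rw [h]; simp

lemma step_formula (n : ℕ) (l1 l2 l3 : ℝ) (t : ℕ) (pe qe px qx pg qg u : Fin n → ℝ)
    (hu : u = qe + qx + qg)
    (h1 : l1 ≠ 0 ∨ qe = 0) (h2 : l2 ≠ 0 ∨ qx = 0) (h3 : l3 ≠ 0 ∨ qg = 0) :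
    (1-l1) • ((1-l1)^t • pe + ((1/l1)*(1-(1-l1)^t)) • qe)
    + (1-l2) • ((1-l2)^t • px + ((1/l2)*(1-(1-l2)^t)) • qx)
    + (1-l3) • ((1-l3)^t • pg + ((1/l3)*(1-(1-l3)^t)) • qg)
    + u
    = (1-l1)^(t+1) • pe + ((1/l1)*(1-(1-l1)^(t+1))) • qe
      + (1-l2)^(t+1) • px + ((1/l2)*(1-(1-l2)^(t+1))) • qx
      + (1-l3)^(t+1) • pg + ((1/l3)*(1-(1-l3)^(t+1))) • qg := by
  subst hu
  have e1 := geom_pair n l1 t pe qe h1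
  have e2 := geom_pair n l2 t px qx h2
  have e3 := geom_pair n l3 t pg qg h3
  calc (1-l1) • ((1-l1)^t • pe + ((1/l1)*(1-(1-l1)^t)) • qe)
      + (1-l2) • ((1-l2)^t • px + ((1/l2)*(1-(1-l2)^t)) • qx)
      + (1-l3) • ((1-l3)^t • pg + ((1/l3)*(1-(1-l3)^t)) • qg)
      + (qe + qx + qg)
      = ((1-l1) • ((1-l1)^t • pe + ((1/l1)*(1-(1-l1)^t)) • qe) + qe)
        + ((1-l2) • ((1-l2)^t • px + ((1/l2)*(1-(1-l2)^t)) • qx) + qx)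
        + ((1-l3) • ((1-l3)^t • pg + ((1/l3)*(1-(1-l3)^t)) • qg) + qg) := by abel
    _ = ((1-l1)^(t+1) • pe + ((1/l1)*(1-(1-l1)^(t+1))) • qe)
        + ((1-l2)^(t+1) • px + ((1/l2)*(1-(1-l2)^(t+1))) • qx)
        + ((1-l3)^(t+1) • pg + ((1/l3)*(1-(1-l3)^(t+1))) • qg) := by rw [e1, e2, e3]
    _ = _ := by abel

lemma Bx_eq (nr ns : ℕ) (hnr_even : Even nr) (hnr_pos : 0 < nr)
    (A : Matrix (Fin (nr + ns)) (Fin (nr + ns)) ℝ)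
    (hA_symm : A.IsSymm) (hA_diag : ∀ i, A i i = 0)
    (lsr ldr ls : ℝ)
    (hA_same : ∀ i j : Fin (nr + ns), i ≠ j → (i : ℕ) < nr → (j : ℕ) < nr →
      (((i : ℕ) < nr / 2) ↔ ((j : ℕ) < nr / 2)) → A i j = lsr)
    (hA_diff : ∀ i j : Fin (nr + ns), (i : ℕ) < nr → (j : ℕ) < nr →
      ¬(((i : ℕ) < nr / 2) ↔ ((j : ℕ) < nr / 2)) → A i j = ldr)
    (hA_rowsum : ∀ i : Fin (nr + ns), (i : ℕ) < nr →
      (∑ j ∈ Finset.univ.filter (fun j : Fin (nr + ns) => nr ≤ (j : ℕ)), A i j) = ls)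
    (x : Fin nr → ℝ) :
    (∑ v : Fin (nr+ns) × Fin (nr+ns),
        (if (v.1:ℕ) < (v.2:ℕ) then A v.1 v.2 else 0) •
          (((regInd nr ns v.1 - regInd nr ns v.2) ⬝ᵥ x) • (regInd nr ns v.1 - regInd nr ns v.2)))
      = ls • projEta nr x + (ldr * nr + ls) • projXi nr x
        + ((lsr + ldr) * nr / 2 + ls) • projGamma nr x := by
  classical
  obtain ⟨m, hm⟩ := hnr_even
  have hm2 : nr / 2 = m := by omega
  have hmnr : m ≤ nr := by omega
  funext k
  set d : Fin (nr+ns) → ℝ := fun i => if h : (i:ℕ) < nr then x ⟨i, h⟩ else 0 with hd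
  have hdot : ∀ i : Fin (nr+ns), regInd nr ns i ⬝ᵥ x = d i := fun i => regInd_dot nr ns i x
  set kh : Fin (nr+ns) := Fin.castAdd ns k with hkh
  have hkhv : (kh : ℕ) = (k : ℕ) := rfl
  have hklt : (kh : ℕ) < nr := by rw [hkhv]; exact k.isLt
  have hdkh : d kh = x k := by
    simp only [hd]; rw [dif_pos hklt]; exact congrArg x (Fin.ext rfl)
  have hreg_at : ∀ i : Fin (nr+ns), regInd nr ns i k = if i = kh then 1 else 0 := by
    intro i
    unfold regInd
    by_cases h : (k:ℕ) = (i:ℕ)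
    · have : i = kh := Fin.ext (by omega)
      simp [h, this]
    · have : i ≠ kh := fun hc => h (by rw [hc]; rfl)
      simp [h, this]
  set T : Fin (nr+ns) → Fin (nr+ns) → ℝ :=
    fun i j => (if (i:ℕ) < (j:ℕ) then A i j else 0) * (d i - d j) with hT
  have hLHS : (∑ v : Fin (nr+ns) × Fin (nr+ns),
        (if (v.1:ℕ) < (v.2:ℕ) then A v.1 v.2 else 0) •
          (((regInd nr ns v.1 - regInd nr ns v.2) ⬝ᵥ x) • (regInd nr ns v.1 - regInd nr ns v.2))) k
      = ∑ j : Fin (nr+ns), A kh j * (x k - d j) := by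
    rw [Finset.sum_apply]
    have step1 : ∀ v : Fin (nr+ns) × Fin (nr+ns),
        ((if (v.1:ℕ) < (v.2:ℕ) then A v.1 v.2 else 0) •
          (((regInd nr ns v.1 - regInd nr ns v.2) ⬝ᵥ x) • (regInd nr ns v.1 - regInd nr ns v.2))) k
        = (if v.1 = kh then T v.1 v.2 else 0) - (if v.2 = kh then T v.1 v.2 else 0) := by
      intro v
      simp only [Pi.smul_apply, Pi.sub_apply, smul_eq_mul, sub_dotProduct, hdot, hreg_at, hT]
      by_cases h1 : v.1 = kh <;> by_cases h2 : v.2 = kh <;> simp [h1, h2] <;>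
        split_ifs <;> ring
    simp only [step1]
    rw [Fintype.sum_prod_type, Finset.sum_congr rfl (fun i _ => Finset.sum_sub_distrib _ _)]
    rw [Finset.sum_sub_distrib]
    have e1 : ∑ i : Fin (nr+ns), ∑ j : Fin (nr+ns), (if i = kh then T i j else 0)
        = ∑ j : Fin (nr+ns), T kh j := by
      rw [Finset.sum_comm]
      apply Finset.sum_congr rfl; intro j _
      simp
    have e2 : ∑ i : Fin (nr+ns), ∑ j : Fin (nr+ns), (if j = kh then T i j else 0)
        = ∑ i : Fin (nr+ns), T i kh := by
      apply Finset.sum_congr rfl; intro i _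
      simp
    rw [e1, e2, ← Finset.sum_sub_distrib]
    apply Finset.sum_congr rfl; intro j _
    by_cases hj : j = kh
    · subst hj; simp [hT, hA_diag]
    · have hvne : (j:ℕ) ≠ (kh:ℕ) := fun hc => hj (Fin.ext hc)
      have hsymm : A j kh = A kh j := hA_symm.apply kh j
      simp only [hT, hdkh]
      rcases lt_or_gt_of_ne hvne with h | h
      · rw [if_neg (by omega), if_pos h, hsymm]; ring
      · rw [if_pos h, if_neg (by omega)]; ring
  rw [hLHS]
  -- row split
  have hd0 : ∀ s : Fin ns, d (Fin.natAdd nr s) = 0 := by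
    intro s
    have : ¬ ((Fin.natAdd nr s : Fin (nr+ns)) : ℕ) < nr := by
      simp [Fin.natAdd]
    simp only [hd]; rw [dif_neg this]
  have hdreg : ∀ l : Fin nr, d (Fin.castAdd ns l) = x l := by
    intro l; simp only [hd]; rw [dif_pos (by simpa using l.isLt)]
    exact congrArg x (Fin.ext rfl)
  have hstubsum : ∑ s : Fin ns, A kh (Fin.natAdd nr s) = ls := by
    have h0 := hA_rowsum kh hklt
    rw [Finset.sum_filter, Fin.sum_univ_add] at h0
    have hz : ∑ l : Fin nr, (if nr ≤ ((Fin.castAdd ns l : Fin (nr+ns)) : ℕ) then A kh (Fin.castAdd ns l) else 0) = 0 := by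
      apply Finset.sum_eq_zero; intro l _
      rw [if_neg (by simpa using l.isLt)]
    have ho : ∀ s : Fin ns, (if nr ≤ ((Fin.natAdd nr s : Fin (nr+ns)) : ℕ) then A kh (Fin.natAdd nr s) else 0) = A kh (Fin.natAdd nr s) := by
      intro s; rw [if_pos (by simp [Fin.natAdd])]
    rw [hz, Finset.sum_congr rfl (fun s _ => ho s), zero_add] at h0
    exact h0
  have hsplit : ∑ j : Fin (nr+ns), A kh j * (x k - d j)
      = (∑ l : Fin nr, A kh (Fin.castAdd ns l) * (x k - x l)) + ls * x k := by
    rw [Fin.sum_univ_add]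
    congr 1
    · apply Finset.sum_congr rfl; intro l _; rw [hdreg]
    · rw [Finset.sum_congr rfl (fun s _ => by rw [hd0 s, sub_zero]), ← Finset.sum_mul, hstubsum]
  rw [hsplit]
  -- community structure
  set p : Fin nr → Prop := fun l => ((l:ℕ) < m ↔ (k:ℕ) < m) with hp
  have key : ∀ y : Fin nr → ℝ, ∑ l : Fin nr, A kh (Fin.castAdd ns l) * y l
      = lsr * ((∑ l ∈ univ.filter p, y l) - y k)
        + ldr * (∑ l ∈ univ.filter (fun l => ¬ p l), y l) := by
    intro y
    rw [← Finset.sum_filter_add_sum_filter_not univ p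
      (fun l => A kh (Fin.castAdd ns l) * y l)]
    congr 1
    · have hkmem : k ∈ univ.filter p := by simp [hp]
      have hterm : ∀ l ∈ univ.filter p, A kh (Fin.castAdd ns l) * y l
          = lsr * y l - (if l = k then lsr * y k else 0) := by
        intro l hl
        by_cases hlk : l = k
        · subst hlk
          have hek : (Fin.castAdd ns l) = kh := rfl
          rw [hek, hA_diag, if_pos rfl]; ring
        · have hne : kh ≠ Fin.castAdd ns l := by
            intro hc
            have hv : (k:ℕ) = (l:ℕ) := by simpa [hkh] using congrArg Fin.val hc
            exact hlk (Fin.ext hv.symm)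
          have hpl : ((l:ℕ) < m ↔ (k:ℕ) < m) := by
            have := (Finset.mem_filter.mp hl).2
            simpa [hp] using this
          have hA : A kh (Fin.castAdd ns l) = lsr := by
            apply hA_same kh (Fin.castAdd ns l) hne hklt (by simpa using l.isLt)
            rw [hm2]
            simpa [hkh] using hpl.symm
          rw [hA, if_neg hlk]; ring
      rw [Finset.sum_congr rfl hterm, Finset.sum_sub_distrib,
        Finset.sum_ite_eq' _ k (fun _ => lsr * y k), if_pos hkmem]
      rw [mul_sub, Finset.mul_sum]
    · rw [Finset.mul_sum]
      apply Finset.sum_congr rfl; intro l hl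
      have hpl : ¬ ((l:ℕ) < m ↔ (k:ℕ) < m) := by
        have := (Finset.mem_filter.mp hl).2
        simpa [hp] using this
      have hA : A kh (Fin.castAdd ns l) = ldr := by
        apply hA_diff kh (Fin.castAdd ns l) hklt (by simpa using l.isLt)
        rw [hm2]
        simpa [hkh] using fun h => hpl (Iff.symm h)
      rw [hA]
  -- sums over communities
  set σ1 : ℝ := ∑ l ∈ univ.filter (fun l : Fin nr => (l:ℕ) < m), x l with hσ1
  set σ2 : ℝ := ∑ l ∈ univ.filter (fun l : Fin nr => ¬ (l:ℕ) < m), x l with hσ2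
  have hσsum : ∑ l, x l = σ1 + σ2 :=
    (Finset.sum_filter_add_sum_filter_not univ _ x).symm
  have hc1 : ∑ l ∈ univ.filter (fun l : Fin nr => (l:ℕ) < m), (1:ℝ) = m := by
    rw [Finset.sum_filter]; exact card_filter_lt nr m hmnr
  have hnrR : ((nr:ℕ):ℝ) = (m:ℝ) + (m:ℝ) := by rw [hm]; push_cast; ring
  have hc2 : ∑ l ∈ univ.filter (fun l : Fin nr => ¬ (l:ℕ) < m), (1:ℝ) = m := by
    rw [Finset.sum_filter]
    have hterm : ∀ l : Fin nr, (if ¬ (l:ℕ) < m then (1:ℝ) else 0)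
        = 1 - (if (l:ℕ) < m then (1:ℝ) else 0) := by
      intro l; split_ifs <;> simp_all
    rw [Finset.sum_congr rfl (fun l _ => hterm l), Finset.sum_sub_distrib,
      card_filter_lt nr m hmnr, Finset.sum_const, Finset.card_univ, Fintype.card_fin]
    rw [nsmul_eq_mul, mul_one, hnrR]; ring
  -- sqrt facts
  have hs0 : (0:ℝ) ≤ (nr:ℝ) := Nat.cast_nonneg nr
  have hs : Real.sqrt nr * Real.sqrt nr = (nr:ℝ) := Real.mul_self_sqrt hs0
  have hnrpos : (0:ℝ) < (nr:ℝ) := by exact_mod_cast hnr_pos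
  have hsne : Real.sqrt nr ≠ 0 := by positivity
  have hmpos : (0:ℝ) < (m:ℝ) := by
    have : 0 < m := by omega
    exact_mod_cast this
  have hcomb : ∀ a : ℝ, (a / Real.sqrt nr) * (1 / Real.sqrt nr) = a / (nr:ℝ) := by
    intro a; rw [div_mul_div_comm, mul_one, hs]
  have hcombn : ∀ a : ℝ, (a / Real.sqrt nr) * (-1 / Real.sqrt nr) = -(a / (nr:ℝ)) := by
    intro a; rw [div_mul_div_comm, mul_neg_one, hs, neg_div]
  have heta : etaV nr ⬝ᵥ x = (σ1 + σ2) / Real.sqrt nr := by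
    unfold etaV dotProduct
    rw [← hσsum, Finset.sum_div]
    apply Finset.sum_congr rfl; intro l _; rw [one_div, inv_mul_eq_div]
  have hxi : xiV nr ⬝ᵥ x = (σ1 - σ2) / Real.sqrt nr := by
    unfold xiV dotProduct
    have hterm : ∀ l : Fin nr, ((if (l:ℕ) < nr/2 then (1:ℝ) else -1) / Real.sqrt nr) * x l
        = (if (l:ℕ) < m then x l / Real.sqrt nr else 0)
          - (if ¬ (l:ℕ) < m then x l / Real.sqrt nr else 0) := by
      intro l; rw [hm2]; split_ifs with h h2 h3 <;> simp_all <;> ring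
    rw [Finset.sum_congr rfl (fun l _ => hterm l), Finset.sum_sub_distrib,
      ← Finset.sum_filter, ← Finset.sum_filter, ← Finset.sum_div, ← Finset.sum_div,
      ← hσ1, ← hσ2, div_sub_div_same]
  -- expand the LHS regular sum
  have expand : ∑ l : Fin nr, A kh (Fin.castAdd ns l) * (x k - x l)
      = (∑ l : Fin nr, A kh (Fin.castAdd ns l) * 1) * x k
        - ∑ l : Fin nr, A kh (Fin.castAdd ns l) * x l := by
    rw [Finset.sum_mul, ← Finset.sum_sub_distrib]
    apply Finset.sum_congr rfl; intro l _; ring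
  rw [expand, key (fun _ => (1:ℝ)), key x]
  simp only [Pi.add_apply, Pi.smul_apply, smul_eq_mul, projGamma, projEta, projXi,
    Pi.sub_apply, heta, hxi, etaV, xiV, hcomb, hcombn]
  by_cases hk : (k:ℕ) < m
  · have hfp : univ.filter p = univ.filter (fun l : Fin nr => (l:ℕ) < m) := by
      apply Finset.filter_congr; intro l _; simp [hp, hk]
    have hfnp : univ.filter (fun l => ¬ p l) = univ.filter (fun l : Fin nr => ¬ (l:ℕ) < m) := by
      apply Finset.filter_congr; intro l _; simp [hp, hk]
    rw [hfp, hfnp, hc1, hc2, ← hσ1, ← hσ2, hm2, if_pos hk, hcomb, hnrR]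
    field_simp
    ring
  · have hfp : univ.filter p = univ.filter (fun l : Fin nr => ¬ (l:ℕ) < m) := by
      apply Finset.filter_congr; intro l _; simp [hp, hk]
    have hfnp : univ.filter (fun l => ¬ p l) = univ.filter (fun l : Fin nr => (l:ℕ) < m) := by
      apply Finset.filter_congr; intro l _; simp [hp, hk]
    rw [hfp, hfnp, hc1, hc2, ← hσ1, ← hσ2, hm2, if_neg hk, hcombn, hnrR]
    field_simp
    ring

theorem gossip_expectation_formula
    (nr ns : ℕ) (hnr_even : Even nr) (hnr_pos : 0 < nr) (hns_pos : 0 < ns)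
    (A : Matrix (Fin (nr + ns)) (Fin (nr + ns)) ℝ)
    (hA_symm : A.IsSymm) (hA_diag : ∀ i, A i i = 0)
    (lsr ldr ls : ℝ)
    (hlsr : lsr ∈ Set.Ioo (0 : ℝ) 1) (hldr : ldr ∈ Set.Ioo (0 : ℝ) 1)
    (hls_nonneg : 0 ≤ ls)
    (hA_same : ∀ i j : Fin (nr + ns), i ≠ j → (i : ℕ) < nr → (j : ℕ) < nr →
      (((i : ℕ) < nr / 2) ↔ ((j : ℕ) < nr / 2)) → A i j = lsr)
    (hA_diff : ∀ i j : Fin (nr + ns), (i : ℕ) < nr → (j : ℕ) < nr →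
      ¬(((i : ℕ) < nr / 2) ↔ ((j : ℕ) < nr / 2)) → A i j = ldr)
    (hA_stub : ∀ i j : Fin (nr + ns), (i : ℕ) < nr → nr ≤ (j : ℕ) →
      A i j ∈ Set.Ico (0 : ℝ) 1)
    (hA_ss : ∀ i j : Fin (nr + ns), nr ≤ (i : ℕ) → nr ≤ (j : ℕ) → A i j = 0)
    (hA_rowsum : ∀ i : Fin (nr + ns), (i : ℕ) < nr →
      (∑ j ∈ Finset.univ.filter (fun j : Fin (nr + ns) => nr ≤ (j : ℕ)), A i j) = ls)
    (Ω : Type) [MeasurableSpace Ω] (P : Measure Ω) [IsProbabilityMeasure P]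
    (edge : ℕ → Ω → Fin (nr + ns) × Fin (nr + ns))
    (hmeas : ∀ t, Measurable (edge t))
    (hlt : ∀ t ω, (edge t ω).1 < (edge t ω).2)
    (hdist : ∀ (t : ℕ) (i j : Fin (nr + ns)), i < j →
      P {ω | edge t ω = (i, j)} = ENNReal.ofReal (A i j / alphaW nr ns A))
    (hindep : iIndepFun edge P)
    (x0 : Fin nr → ℝ) (zs : Fin ns → ℝ)
    (X : ℕ → Ω → Fin nr → ℝ)
    (hX0 : ∀ ω, X 0 ω = x0)
    (hXrec : ∀ t ω, X (t + 1) ω =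
      Qmat nr ns (edge t ω) *ᵥ X t ω + Rmat nr ns (edge t ω) *ᵥ zs)
    (l1 : ℝ) (hl1 : l1 = ls / (2 * alphaW nr ns A))
    (l2 : ℝ) (hl2 : l2 = (ldr * (nr : ℝ) + ls) / (2 * alphaW nr ns A))
    (l3 : ℝ) (hl3 : l3 = ((lsr + ldr) * (nr : ℝ) / 2 + ls) / (2 * alphaW nr ns A))
    :
    ∀ t : ℕ,
      (fun i => ∫ ω, X t ω i ∂P) =
        (1 - l1) ^ t • projEta nr x0 +
        ((1 / l1) * (1 - (1 - l1) ^ t)) •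
          projEta nr ((2 * alphaW nr ns A)⁻¹ • (MtilM nr ns A *ᵥ zs)) +
        (1 - l2) ^ t • projXi nr x0 +
        ((1 / l2) * (1 - (1 - l2) ^ t)) •
          projXi nr ((2 * alphaW nr ns A)⁻¹ • (MtilM nr ns A *ᵥ zs)) +
        (1 - l3) ^ t • projGamma nr x0 +
        ((1 / l3) * (1 - (1 - l3) ^ t)) •
          projGamma nr ((2 * alphaW nr ns A)⁻¹ • (MtilM nr ns A *ᵥ zs)) := by
  classical
  haveI hne_pair : Nonempty (Fin (nr+ns) × Fin (nr+ns)) :=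
    ⟨⟨⟨0, by omega⟩, ⟨0, by omega⟩⟩⟩
  set α := alphaW nr ns A with hα
  -- nonnegativity of A
  have hA_nonneg : ∀ i j, 0 ≤ A i j := by
    intro i j
    by_cases hij : i = j
    · rw [hij, hA_diag]
    by_cases hi : (i:ℕ) < nr
    · by_cases hj : (j:ℕ) < nr
      · by_cases hc : ((i:ℕ) < nr/2 ↔ (j:ℕ) < nr/2)
        · rw [hA_same i j hij hi hj hc]; exact le_of_lt hlsr.1
        · rw [hA_diff i j hi hj hc]; exact le_of_lt hldr.1
      · exact (hA_stub i j hi (le_of_not_gt hj)).1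
    · by_cases hj : (j:ℕ) < nr
      · rw [hA_symm.apply j i]; exact (hA_stub j i hj (le_of_not_gt hi)).1
      · rw [hA_ss i j (le_of_not_gt hi) (le_of_not_gt hj)]
  -- positivity of α
  have h2le : 2 ≤ nr := by
    obtain ⟨m, hm⟩ := hnr_even; omega
  have hα_pos : 0 < α := by
    have hi0 : (0:ℕ) < nr + ns := by omega
    have hj0 : (1:ℕ) < nr + ns := by omega
    set i0 : Fin (nr+ns) := ⟨0, hi0⟩ with hi0d
    set j0 : Fin (nr+ns) := ⟨1, hj0⟩ with hj0d
    have hv0 : (i0:ℕ) = 0 := rfl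
    have hv1 : (j0:ℕ) = 1 := rfl
    have hij0 : (0:ℝ) < A i0 j0 := by
      by_cases hcm : ((i0:ℕ) < nr/2 ↔ (j0:ℕ) < nr/2)
      · rw [hA_same i0 j0 (by simp [Fin.ext_iff, hi0d, hj0d]) (by omega) (by omega) hcm]
        exact hlsr.1
      · rw [hA_diff i0 j0 (by omega) (by omega) hcm]
        exact hldr.1
    rw [hα]; unfold alphaW
    have hstep1 : A i0 j0 ≤ ∑ j : Fin (nr+ns), if (i0:ℕ) < (j:ℕ) then A i0 j else 0 := by
      have h1 : A i0 j0 = if (i0:ℕ) < (j0:ℕ) then A i0 j0 else 0 := by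
        rw [if_pos (by omega)]
      rw [h1]
      apply Finset.single_le_sum (f := fun j : Fin (nr+ns) => if (i0:ℕ) < (j:ℕ) then A i0 j else 0)
      · intro j _; split_ifs
        · exact hA_nonneg _ _
        · exact le_refl 0
      · exact Finset.mem_univ _
    have hstep2 : (∑ j : Fin (nr+ns), if (i0:ℕ) < (j:ℕ) then A i0 j else 0)
        ≤ ∑ i : Fin (nr+ns), ∑ j : Fin (nr+ns), if (i:ℕ) < (j:ℕ) then A i j else 0 := by
      apply Finset.single_le_sum
        (f := fun i : Fin (nr+ns) => ∑ j : Fin (nr+ns), if (i:ℕ) < (j:ℕ) then A i j else 0)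
      · intro i _
        apply Finset.sum_nonneg; intro j _; split_ifs
        · exact hA_nonneg _ _
        · exact le_refl 0
      · exact Finset.mem_univ _
    exact lt_of_lt_of_le hij0 (le_trans hstep1 hstep2)
  have hα_ne : α ≠ 0 := ne_of_gt hα_pos
  -- the probability weights
  set w : Fin (nr+ns) × Fin (nr+ns) → ℝ :=
    fun v => (if (v.1:ℕ) < (v.2:ℕ) then A v.1 v.2 else 0) / α with hw
  have hw_sum : ∑ v : Fin (nr+ns) × Fin (nr+ns), w v = 1 := by
    simp only [hw]
    rw [← Finset.sum_div, Fintype.sum_prod_type]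
    rw [show (∑ i : Fin (nr+ns), ∑ j : Fin (nr+ns), if (i:ℕ) < (j:ℕ) then A i j else 0) = α from (hα.trans rfl).symm]
    exact div_self hα_ne
  have hPv : ∀ (t : ℕ) (v : Fin (nr+ns) × Fin (nr+ns)),
      (P {ω | edge t ω = v}).toReal = w v := by
    intro t v
    by_cases hv : (v.1:ℕ) < (v.2:ℕ)
    · have hset : {ω | edge t ω = v} = {ω | edge t ω = (v.1, v.2)} := rfl
      rw [hset, hdist t v.1 v.2 (Fin.lt_def.mpr hv),
        ENNReal.toReal_ofReal (div_nonneg (hA_nonneg _ _) hα_pos.le)]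
      simp only [hw, if_pos hv]
    · have hempty : {ω | edge t ω = v} = ∅ := by
        ext ω
        simp only [Set.mem_setOf_eq, Set.mem_empty_iff_false, iff_false]
        intro hc
        have h := hlt t ω
        rw [hc] at h
        exact hv (Fin.lt_def.mp h)
      rw [hempty]
      simp only [hw, if_neg hv, measure_empty, ENNReal.toReal_zero, zero_div]
  -- integral of a function of an edge
  have hint_edge : ∀ (t : ℕ) (f : Fin (nr+ns) × Fin (nr+ns) → ℝ),
      ∫ ω, f (edge t ω) ∂P = ∑ v : Fin (nr+ns) × Fin (nr+ns), w v * f v := by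
    intro t f
    rw [← integral_map (hmeas t).aemeasurable (measurable_of_countable f).aestronglyMeasurable]
    have : IsProbabilityMeasure (P.map (edge t)) :=
      Measure.isProbabilityMeasure_map (hmeas t).aemeasurable
    rw [integral_fintype (Integrable.of_finite)]
    apply Finset.sum_congr rfl
    intro v _
    rw [Measure.real, Measure.map_apply (hmeas t) (measurableSet_singleton v), smul_eq_mul]
    congr 1
    exact hPv t v
  -- boundedness → integrability
  have hbd_int : ∀ f : Ω → ℝ, Measurable f → (∃ C, ∀ ω, |f ω| ≤ C) → Integrable f P := by
    rintro f hf ⟨C, hC⟩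
    exact (integrable_const C).mono' hf.aestronglyMeasurable
      (Filter.Eventually.of_forall fun ω => by simpa [Real.norm_eq_abs] using hC ω)
  -- X t is a function of the first t edges
  have hrep : ∀ t : ℕ, ∃ F : (Fin t → Fin (nr+ns) × Fin (nr+ns)) → (Fin nr → ℝ),
      ∀ ω, X t ω = F (fun k => edge (k:ℕ) ω) := by
    intro t
    induction t with
    | zero => exact ⟨fun _ => x0, fun ω => hX0 ω⟩
    | succ t ih =>
      obtain ⟨F, hF⟩ := ih
      refine ⟨fun g => Qmat nr ns (g (Fin.last t)) *ᵥ F (fun k => g k.castSucc)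
        + Rmat nr ns (g (Fin.last t)) *ᵥ zs, fun ω => ?_⟩
      rw [hXrec t ω, hF ω]
      rfl
  have hXmeas : ∀ (t : ℕ) (j : Fin nr), Measurable (fun ω => X t ω j) := by
    intro t j
    obtain ⟨F, hF⟩ := hrep t
    have : (fun ω => X t ω j) = (fun g => F g j) ∘ (fun ω (k : Fin t) => edge (k:ℕ) ω) := by
      funext ω; simp [hF ω]
    rw [this]
    exact (measurable_of_countable _).comp (measurable_pi_lambda _ fun k => hmeas k)
  have hXbd : ∀ (t : ℕ) (j : Fin nr), ∃ C, ∀ ω, |X t ω j| ≤ C := by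
    intro t j
    obtain ⟨F, hF⟩ := hrep t
    refine ⟨(Finset.univ : Finset (Fin t → Fin (nr+ns) × Fin (nr+ns))).sup'
      Finset.univ_nonempty (fun g => |F g j|), fun ω => ?_⟩
    rw [hF ω]
    exact Finset.le_sup' (fun g => |F g j|) (Finset.mem_univ _)
  -- independence factorization
  have hfact : ∀ (t : ℕ) (g : Fin (nr+ns) × Fin (nr+ns) → ℝ) (j : Fin nr),
      ∫ ω, g (edge t ω) * X t ω j ∂P
        = (∫ ω, g (edge t ω) ∂P) * ∫ ω, X t ω j ∂P := by
    intro t g j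
    obtain ⟨F, hF⟩ := hrep t
    have hIF : IndepFun (fun ω => g (edge t ω)) (fun ω => X t ω j) P := by
      have hST : Disjoint ({t} : Finset ℕ) (Finset.range t) := by
        simp [Finset.disjoint_left]
      have h := hindep.indepFun_finset {t} (Finset.range t) hST hmeas
      have h2 := h.comp
        (φ := fun (p : ↥({t} : Finset ℕ) → Fin (nr+ns) × Fin (nr+ns)) => g (p ⟨t, by simp⟩))
        (ψ := fun (p : ↥(Finset.range t) → Fin (nr+ns) × Fin (nr+ns)) =>
          F (fun k => p ⟨(k : ℕ), by simp [k.isLt]⟩) j)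
        (measurable_of_countable _) (measurable_of_countable _)
      have he : (fun ω => X t ω j) = fun ω => F (fun k : Fin t => edge (k:ℕ) ω) j := by
        funext ω; rw [hF ω]
      rw [he]
      exact h2
    exact hIF.integral_mul_eq_mul_integral
      (((measurable_of_countable g).comp (hmeas t)).aestronglyMeasurable)
      ((hXmeas t j).aestronglyMeasurable)
  -- the constant input vector
  set c : Fin nr → ℝ := ∑ v : Fin (nr+ns) × Fin (nr+ns), w v • (Rmat nr ns v *ᵥ zs) with hc
  -- one-step recursion for the means
  have hrec : ∀ t : ℕ, (fun i => ∫ ω, X (t+1) ω i ∂P)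
      = (∑ v : Fin (nr+ns) × Fin (nr+ns),
          w v • (Qmat nr ns v *ᵥ (fun i => ∫ ω, X t ω i ∂P))) + c := by
    intro t
    funext i
    have hQint : ∀ j : Fin nr,
        Integrable (fun ω => Qmat nr ns (edge t ω) i j * X t ω j) P := by
      intro j
      apply hbd_int
      · exact ((measurable_of_countable (fun e => Qmat nr ns e i j)).comp (hmeas t)).mul
          (hXmeas t j)
      · obtain ⟨C, hC⟩ := hXbd t j
        refine ⟨(Finset.univ.sup' Finset.univ_nonempty
          (fun e : Fin (nr+ns) × Fin (nr+ns) => |Qmat nr ns e i j|)) * C, fun ω => ?_⟩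
        rw [abs_mul]
        have h1 : |Qmat nr ns (edge t ω) i j|
            ≤ Finset.univ.sup' Finset.univ_nonempty
              (fun e : Fin (nr+ns) × Fin (nr+ns) => |Qmat nr ns e i j|) :=
          Finset.le_sup' (fun e : Fin (nr+ns) × Fin (nr+ns) => |Qmat nr ns e i j|)
            (Finset.mem_univ _)
        exact mul_le_mul h1 (hC ω) (abs_nonneg _) (le_trans (abs_nonneg _) h1)
    have hRint : Integrable (fun ω => (Rmat nr ns (edge t ω) *ᵥ zs) i) P := by
      apply hbd_int
      · exact (measurable_of_countable (fun e => (Rmat nr ns e *ᵥ zs) i)).comp (hmeas t)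
      · exact ⟨Finset.univ.sup' Finset.univ_nonempty
          (fun e : Fin (nr+ns) × Fin (nr+ns) => |(Rmat nr ns e *ᵥ zs) i|),
          fun ω => Finset.le_sup' (fun e : Fin (nr+ns) × Fin (nr+ns) => |(Rmat nr ns e *ᵥ zs) i|)
            (Finset.mem_univ _)⟩
    calc ∫ ω, X (t+1) ω i ∂P
        = ∫ ω, ((∑ j, Qmat nr ns (edge t ω) i j * X t ω j)
            + (Rmat nr ns (edge t ω) *ᵥ zs) i) ∂P := by
          refine integral_congr_ae (Filter.Eventually.of_forall fun ω => ?_)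
          show X (t+1) ω i = _
          rw [hXrec t ω]
          simp [Matrix.mulVec, dotProduct]
      _ = (∑ j, ∫ ω, Qmat nr ns (edge t ω) i j * X t ω j ∂P)
          + ∫ ω, (Rmat nr ns (edge t ω) *ᵥ zs) i ∂P := by
          rw [integral_add (integrable_finset_sum _ (fun j _ => hQint j)) hRint,
            integral_finset_sum _ (fun j _ => hQint j)]
      _ = (∑ j, (∑ v : Fin (nr+ns) × Fin (nr+ns), w v * Qmat nr ns v i j)
            * ∫ ω, X t ω j ∂P)
          + ∑ v : Fin (nr+ns) × Fin (nr+ns), w v * (Rmat nr ns v *ᵥ zs) i := by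
          rw [hint_edge t (fun e => (Rmat nr ns e *ᵥ zs) i)]
          congr 1
          apply Finset.sum_congr rfl; intro j _
          rw [hfact t (fun e => Qmat nr ns e i j) j,
            hint_edge t (fun e => Qmat nr ns e i j)]
      _ = ((∑ v : Fin (nr+ns) × Fin (nr+ns),
            w v • (Qmat nr ns v *ᵥ (fun i => ∫ ω, X t ω i ∂P))) + c) i := by
          simp only [Pi.add_apply, Finset.sum_apply, Pi.smul_apply, smul_eq_mul, hc]
          congr 1
          simp only [Finset.sum_mul]
          rw [Finset.sum_comm]
          apply Finset.sum_congr rfl; intro v _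
          simp [Matrix.mulVec, dotProduct, Finset.mul_sum, mul_assoc]
  -- Qbar action on the projections
  have hQy : ∀ (v : Fin (nr+ns) × Fin (nr+ns)) (y : Fin nr → ℝ),
      Qmat nr ns v *ᵥ y = y - (2⁻¹:ℝ) • (((regInd nr ns v.1 - regInd nr ns v.2) ⬝ᵥ y)
        • (regInd nr ns v.1 - regInd nr ns v.2)) := by
    intro v y
    unfold Qmat
    rw [Matrix.sub_mulVec, Matrix.one_mulVec, Matrix.smul_mulVec, vecMulVec_mulVec']
  have hQb : ∀ y : Fin nr → ℝ,
      (∑ v : Fin (nr+ns) × Fin (nr+ns), w v • (Qmat nr ns v *ᵥ y))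
        = (1-l1) • projEta nr y + (1-l2) • projXi nr y + (1-l3) • projGamma nr y := by
    intro y
    have e1 : ∀ v : Fin (nr+ns) × Fin (nr+ns),
        w v • (Qmat nr ns v *ᵥ y)
        = w v • y - (2⁻¹ * α⁻¹) • ((if (v.1:ℕ)<(v.2:ℕ) then A v.1 v.2 else 0)
            • (((regInd nr ns v.1 - regInd nr ns v.2) ⬝ᵥ y)
              • (regInd nr ns v.1 - regInd nr ns v.2))) := by
      intro v
      rw [hQy, smul_sub]
      congr 1
      rw [smul_smul, smul_smul, smul_smul, smul_smul]
      congr 1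
      simp only [hw]
      ring
    rw [Finset.sum_congr rfl (fun v _ => e1 v), Finset.sum_sub_distrib,
      ← Finset.sum_smul, hw_sum, one_smul, ← Finset.smul_sum]
    rw [Bx_eq nr ns hnr_even hnr_pos A hA_symm hA_diag lsr ldr ls hA_same hA_diff hA_rowsum y]
    have hd1 : (2⁻¹ * α⁻¹) • (ls • projEta nr y) = l1 • projEta nr y := by
      rw [smul_smul]; congr 1; rw [hl1]; field_simp
    have hd2 : (2⁻¹ * α⁻¹) • ((ldr * (nr:ℝ) + ls) • projXi nr y) = l2 • projXi nr y := by
      rw [smul_smul]; congr 1; rw [hl2]; field_simp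
    have hd3 : (2⁻¹ * α⁻¹) • (((lsr + ldr) * (nr:ℝ) / 2 + ls) • projGamma nr y)
        = l3 • projGamma nr y := by
      rw [smul_smul]; congr 1; rw [hl3, div_eq_mul_inv ((lsr + ldr) * (nr:ℝ) / 2 + ls) (2*α), mul_inv]; ring
    rw [smul_add, smul_add, hd1, hd2, hd3]
    calc y - (l1 • projEta nr y + l2 • projXi nr y + l3 • projGamma nr y)
        = (projEta nr y + projXi nr y + projGamma nr y)
          - (l1 • projEta nr y + l2 • projXi nr y + l3 • projGamma nr y) := by
          rw [proj_decomp nr y]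
      _ = (1-l1) • projEta nr y + (1-l2) • projXi nr y + (1-l3) • projGamma nr y := by
          simp only [sub_smul, one_smul]; abel
  -- the constant vector
  have hcval : c = (2*α)⁻¹ • (MtilM nr ns A *ᵥ zs) := by
    have e1 : ∀ v : Fin (nr+ns) × Fin (nr+ns),
        w v • (Rmat nr ns v *ᵥ zs)
        = (2⁻¹ * α⁻¹) • ((if (v.1:ℕ)<(v.2:ℕ) then A v.1 v.2 else 0)
            • ((stubInd nr ns v.2 ⬝ᵥ zs) • regInd nr ns v.1)) := by
      intro v
      unfold Rmat
      rw [Matrix.smul_mulVec, vecMulVec_mulVec', smul_smul, smul_smul, smul_smul, smul_smul]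
      congr 1
      simp only [hw]
      ring
    rw [hc, Finset.sum_congr rfl (fun v _ => e1 v), ← Finset.smul_sum, Rv_eq nr ns A zs]
    congr 1
    rw [mul_inv]
  -- nondegeneracy / degenerate cases
  have hnrposR : (0:ℝ) < (nr:ℝ) := by exact_mod_cast hnr_pos
  have h2α_pos : (0:ℝ) < 2*α := by linarith
  have hl2ne : l2 ≠ 0 := by
    rw [hl2]
    apply ne_of_gt
    apply div_pos _ h2α_pos
    have := mul_pos hldr.1 hnrposR
    linarith
  have hl3ne : l3 ≠ 0 := by
    rw [hl3]
    apply ne_of_gt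
    apply div_pos _ h2α_pos
    have h1 : 0 < (lsr + ldr) * (nr:ℝ) := mul_pos (by linarith [hlsr.1, hldr.1]) hnrposR
    linarith
  have hu0 : l1 = 0 → (2*α)⁻¹ • (MtilM nr ns A *ᵥ zs) = 0 := by
    intro h10
    have hls0 : ls = 0 := by
      rw [hl1] at h10
      rcases div_eq_zero_iff.mp h10 with h | h
      · exact h
      · exact absurd h (ne_of_gt h2α_pos)
    have hM0 : MtilM nr ns A = 0 := by
      ext k s
      simp only [MtilM, Matrix.of_apply, Matrix.zero_apply]
      have hsum0 := hA_rowsum (Fin.castAdd ns k) k.isLt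
      rw [hls0] at hsum0
      have hnn : ∀ j ∈ Finset.univ.filter (fun j : Fin (nr+ns) => nr ≤ (j:ℕ)),
          0 ≤ A (Fin.castAdd ns k) j := fun j hj =>
        (hA_stub _ j k.isLt (Finset.mem_filter.mp hj).2).1
      exact (Finset.sum_eq_zero_iff_of_nonneg hnn).mp hsum0 (Fin.natAdd nr s)
        (by simp only [Finset.mem_filter, Finset.mem_univ, Fin.coe_natAdd, true_and]; omega)
    rw [hM0, Matrix.zero_mulVec, smul_zero]
  have hl1c : l1 ≠ 0 ∨ projEta nr ((2*α)⁻¹ • (MtilM nr ns A *ᵥ zs)) = 0 := by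
    by_cases h : l1 = 0
    · right; rw [hu0 h, projEta_zero]
    · left; exact h
  -- final induction
  intro t
  induction t with
  | zero =>
    have hm0 : (fun i => ∫ ω, X 0 ω i ∂P) = x0 := by
      funext i; simp [hX0]
    rw [hm0]
    simp only [pow_zero, sub_self, mul_zero, zero_smul, add_zero, one_smul]
    exact (proj_decomp nr x0).symm
  | succ t ih =>
    rw [hrec t, ih, hQb]
    set u : Fin nr → ℝ := (2*α)⁻¹ • (MtilM nr ns A *ᵥ zs) with hu
    have hpe : projEta nr
        ((1 - l1) ^ t • projEta nr x0 + ((1 / l1) * (1 - (1 - l1) ^ t)) • projEta nr u +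
          (1 - l2) ^ t • projXi nr x0 + ((1 / l2) * (1 - (1 - l2) ^ t)) • projXi nr u +
          (1 - l3) ^ t • projGamma nr x0 + ((1 / l3) * (1 - (1 - l3) ^ t)) • projGamma nr u)
        = (1 - l1) ^ t • projEta nr x0 + ((1 / l1) * (1 - (1 - l1) ^ t)) • projEta nr u := by
      simp only [projEta_add, projEta_smul, projEta_projEta nr hnr_pos,
        projEta_projXi nr hnr_even hnr_pos, projEta_projGamma nr hnr_even hnr_pos,
        smul_zero, add_zero]
    have hpx : projXi nr
        ((1 - l1) ^ t • projEta nr x0 + ((1 / l1) * (1 - (1 - l1) ^ t)) • projEta nr u +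
          (1 - l2) ^ t • projXi nr x0 + ((1 / l2) * (1 - (1 - l2) ^ t)) • projXi nr u +
          (1 - l3) ^ t • projGamma nr x0 + ((1 / l3) * (1 - (1 - l3) ^ t)) • projGamma nr u)
        = (1 - l2) ^ t • projXi nr x0 + ((1 / l2) * (1 - (1 - l2) ^ t)) • projXi nr u := by
      simp only [projXi_add, projXi_smul, projXi_projEta nr hnr_even hnr_pos,
        projXi_projXi nr hnr_pos, projXi_projGamma nr hnr_even hnr_pos,
        smul_zero, add_zero, zero_add]
    have hpg : projGamma nr
        ((1 - l1) ^ t • projEta nr x0 + ((1 / l1) * (1 - (1 - l1) ^ t)) • projEta nr u +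
          (1 - l2) ^ t • projXi nr x0 + ((1 / l2) * (1 - (1 - l2) ^ t)) • projXi nr u +
          (1 - l3) ^ t • projGamma nr x0 + ((1 / l3) * (1 - (1 - l3) ^ t)) • projGamma nr u)
        = (1 - l3) ^ t • projGamma nr x0 + ((1 / l3) * (1 - (1 - l3) ^ t)) • projGamma nr u := by
      simp only [projGamma_add, projGamma_smul, projGamma_projEta nr hnr_even hnr_pos,
        projGamma_projXi nr hnr_even hnr_pos, projGamma_projGamma nr hnr_even hnr_pos,
        smul_zero, add_zero, zero_add]
    rw [hpe, hpx, hpg, hcval]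
    exact step_formula nr l1 l2 l3 t (projEta nr x0) (projEta nr u) (projXi nr x0)
      (projXi nr u) (projGamma nr x0) (projGamma nr u) u (proj_decomp nr u).symm
      (by rcases hl1c with h | h
          · exact Or.inl h
          · right; exact h)
      (Or.inl hl2ne) (Or.inl hl3ne)



end
end

section
/- Under the gossip model setup, the one-step update matrix Q(0) satisfies the identity E{Q(0)^T ηη^T Q(0)} = (1 − 2λ1)·ηη^T + (λ1/(2 r0 n))·I_{r0 n}. -/
open MeasureTheory ProbabilityTheory Matrix Finset Filter

set_option autoImplicit false
set_option linter.unusedVariables false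

noncomputable section

lemma gq_sum_delta (M m : ℕ) (hm : m < M) (f : Fin M → ℝ) :
    ∑ i : Fin M, (if (i : ℕ) = m then f i else 0) = f ⟨m, hm⟩ := by
  rw [Finset.sum_eq_single (⟨m, hm⟩ : Fin M)]
  · simp
  · intro b _ hb
    exact if_neg fun h => hb (Fin.ext h)
  · simp

lemma gq_sum_delta' (M m : ℕ) (hm : m < M) (f : Fin M → ℝ) :
    ∑ i : Fin M, (if m = (i : ℕ) then f i else 0) = f ⟨m, hm⟩ := by
  simp_rw [@eq_comm ℕ m]
  exact gq_sum_delta M m hm f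

lemma gq_sum_ind (M m : ℕ) :
    ∑ a : Fin M, (if (a : ℕ) = m then (1 : ℝ) else 0) = if m < M then 1 else 0 := by
  by_cases h : m < M
  · rw [if_pos h, gq_sum_delta M m h]
  · rw [if_neg h, Finset.sum_eq_zero]
    intro a _
    exact if_neg (by have := a.isLt; omega)

lemma gq_Qcol (nr ns : ℕ) (p : Fin (nr + ns) × Fin (nr + ns)) (m : Fin nr) :
    (∑ a : Fin nr, Qmat nr ns p a m * etaV nr a) =
      etaV nr m - (2⁻¹ * ((if (p.1 : ℕ) < nr then (1:ℝ) else 0) -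
          (if (p.2 : ℕ) < nr then (1:ℝ) else 0)) * (1 / Real.sqrt nr)) *
        (regInd nr ns p.1 m - regInd nr ns p.2 m) := by
  have e1 : ∀ a : Fin nr, Qmat nr ns p a m * etaV nr a =
      (if a = m then (1:ℝ) else 0) * (1 / Real.sqrt nr)
        - (regInd nr ns p.1 a - regInd nr ns p.2 a) *
            (2⁻¹ * (regInd nr ns p.1 m - regInd nr ns p.2 m) * (1 / Real.sqrt nr)) := by
    intro a
    simp only [Qmat, Matrix.sub_apply, Matrix.smul_apply, Matrix.vecMulVec_apply,
      Matrix.one_apply, smul_eq_mul, Pi.sub_apply, etaV]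
    ring
  rw [Finset.sum_congr rfl fun a _ => e1 a, Finset.sum_sub_distrib, ← Finset.sum_mul,
    ← Finset.sum_mul, Finset.sum_sub_distrib]
  simp only [regInd, gq_sum_ind]
  have : ∑ a : Fin nr, (if a = m then (1:ℝ) else 0) = 1 := by
    simp [Finset.sum_ite_eq']
  rw [this]
  simp only [etaV]
  ring

lemma gq_entry (nr ns : ℕ) (p : Fin (nr + ns) × Fin (nr + ns)) (k l : Fin nr) :
    ((Qmat nr ns p)ᵀ * Matrix.vecMulVec (etaV nr) (etaV nr) * Qmat nr ns p) k l
      = (∑ a, Qmat nr ns p a k * etaV nr a) * (∑ b, Qmat nr ns p b l * etaV nr b) := by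
  simp only [Matrix.mul_apply, Matrix.transpose_apply, Matrix.vecMulVec_apply,
    Finset.sum_mul, Finset.mul_sum]
  exact Finset.sum_congr rfl fun a _ => Finset.sum_congr rfl fun b _ => by ring

lemma gq_integral_comp {Ω β : Type*} [MeasurableSpace Ω] [Fintype β]
    [MeasurableSpace β] [MeasurableSingletonClass β]
    (P : MeasureTheory.Measure Ω) [MeasureTheory.IsFiniteMeasure P]
    (e : Ω → β) (he : Measurable e) (g : β → ℝ) :
    ∫ ω, g (e ω) ∂P = ∑ b, g b * (P (e ⁻¹' {b})).toReal := by
  have h1 : ∀ ω, g (e ω) = ∑ b, Set.indicator (e ⁻¹' {b}) (fun _ => g b) ω := by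
    intro ω
    rw [Finset.sum_eq_single (e ω)]
    · simp [Set.indicator_apply]
    · intro b _ hb
      simp [Set.indicator_apply, Ne.symm hb]
    · simp
  simp only [h1]
  rw [MeasureTheory.integral_finset_sum]
  · refine Finset.sum_congr rfl fun b _ => ?_
    rw [MeasureTheory.integral_indicator_const _ (he (measurableSet_singleton b))]
    simp [mul_comm, Measure.real]
  · intro b _
    exact (MeasureTheory.integrable_const (g b)).indicator (he (measurableSet_singleton b))

theorem gossip_QetaQ_identity
    (nr ns : ℕ) (hnr_even : Even nr) (hnr_pos : 0 < nr) (hns_pos : 0 < ns)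
    (A : Matrix (Fin (nr + ns)) (Fin (nr + ns)) ℝ)
    (hA_symm : A.IsSymm) (hA_diag : ∀ i, A i i = 0)
    (lsr ldr ls : ℝ)
    (hlsr : lsr ∈ Set.Ioo (0 : ℝ) 1) (hldr : ldr ∈ Set.Ioo (0 : ℝ) 1)
    (hls_nonneg : 0 ≤ ls)
    (hA_same : ∀ i j : Fin (nr + ns), i ≠ j → (i : ℕ) < nr → (j : ℕ) < nr →
      (((i : ℕ) < nr / 2) ↔ ((j : ℕ) < nr / 2)) → A i j = lsr)
    (hA_diff : ∀ i j : Fin (nr + ns), (i : ℕ) < nr → (j : ℕ) < nr →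
      ¬(((i : ℕ) < nr / 2) ↔ ((j : ℕ) < nr / 2)) → A i j = ldr)
    (hA_stub : ∀ i j : Fin (nr + ns), (i : ℕ) < nr → nr ≤ (j : ℕ) →
      A i j ∈ Set.Ico (0 : ℝ) 1)
    (hA_ss : ∀ i j : Fin (nr + ns), nr ≤ (i : ℕ) → nr ≤ (j : ℕ) → A i j = 0)
    (hA_rowsum : ∀ i : Fin (nr + ns), (i : ℕ) < nr →
      (∑ j ∈ Finset.univ.filter (fun j : Fin (nr + ns) => nr ≤ (j : ℕ)), A i j) = ls)
    (Ω : Type) [MeasurableSpace Ω] (P : Measure Ω) [IsProbabilityMeasure P]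
    (edge : ℕ → Ω → Fin (nr + ns) × Fin (nr + ns))
    (hmeas : ∀ t, Measurable (edge t))
    (hlt : ∀ t ω, (edge t ω).1 < (edge t ω).2)
    (hdist : ∀ (t : ℕ) (i j : Fin (nr + ns)), i < j →
      P {ω | edge t ω = (i, j)} = ENNReal.ofReal (A i j / alphaW nr ns A))
    (hindep : iIndepFun edge P)
    (l1 : ℝ) (hl1 : l1 = ls / (2 * alphaW nr ns A))
    :
    (Matrix.of fun k l => ∫ ω,
        ((Qmat nr ns (edge 0 ω))ᵀ * Matrix.vecMulVec (etaV nr) (etaV nr) *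
          Qmat nr ns (edge 0 ω)) k l ∂P) =
      (1 - 2 * l1) • Matrix.vecMulVec (etaV nr) (etaV nr) +
        (l1 / (2 * (nr : ℝ))) • (1 : Matrix (Fin nr) (Fin nr) ℝ) := by
  -- basic positivity facts
  have hnr2 : 2 ≤ nr := by
    obtain ⟨m, hm⟩ := hnr_even; omega
  have hA_nonneg : ∀ i j : Fin (nr + ns), (i : ℕ) < (j : ℕ) → 0 ≤ A i j := by
    intro i j hij
    by_cases hjr : (j : ℕ) < nr
    · have hir : (i : ℕ) < nr := hij.trans hjr
      have hne : i ≠ j := fun h => absurd (congrArg Fin.val h) (by omega)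
      by_cases hc : ((i : ℕ) < nr / 2 ↔ (j : ℕ) < nr / 2)
      · rw [hA_same i j hne hir hjr hc]; exact hlsr.1.le
      · rw [hA_diff i j hir hjr hc]; exact hldr.1.le
    · by_cases hir : (i : ℕ) < nr
      · exact (hA_stub i j hir (le_of_not_gt hjr)).1
      · rw [hA_ss i j (le_of_not_gt hir) (le_of_not_gt hjr)]
  have hα_pos : 0 < alphaW nr ns A := by
    have hlt1 : 1 < nr + ns := by omega
    have hlt0 : 0 < nr + ns := by omega
    have hApos : 0 < A ⟨0, hlt0⟩ ⟨1, hlt1⟩ := by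
      have hne : (⟨0, hlt0⟩ : Fin (nr + ns)) ≠ ⟨1, hlt1⟩ := by
        simp [Fin.ext_iff]
      by_cases hc : (((⟨0, hlt0⟩ : Fin (nr + ns)) : ℕ) < nr / 2 ↔
          (((⟨1, hlt1⟩ : Fin (nr + ns)) : ℕ) < nr / 2))
      · rw [hA_same _ _ hne (by simpa using by omega) (by simpa using by omega) hc]
        exact hlsr.1
      · rw [hA_diff _ _ (by simpa using by omega) (by simpa using by omega) hc]
        exact hldr.1
    have hterm : ∀ i : Fin (nr + ns), 0 ≤ ∑ j : Fin (nr + ns),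
        (if (i : ℕ) < (j : ℕ) then A i j else 0) := by
      intro i
      refine Finset.sum_nonneg fun j _ => ?_
      by_cases h : (i : ℕ) < (j : ℕ)
      · rw [if_pos h]; exact hA_nonneg i j h
      · rw [if_neg h]
    refine Finset.sum_pos' (fun i _ => hterm i) ⟨⟨0, hlt0⟩, Finset.mem_univ _, ?_⟩
    refine Finset.sum_pos' (fun j _ => ?_) ⟨⟨1, hlt1⟩, Finset.mem_univ _, ?_⟩
    · by_cases h : ((⟨0, hlt0⟩ : Fin (nr + ns)) : ℕ) < (j : ℕ)
      · rw [if_pos h]; exact hA_nonneg _ _ h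
      · rw [if_neg h]
    · simpa using hApos
  have hα0 : alphaW nr ns A ≠ 0 := ne_of_gt hα_pos
  have hs0 : Real.sqrt nr ≠ 0 :=
    ne_of_gt (Real.sqrt_pos.mpr (by exact_mod_cast hnr_pos))
  ext k l
  rw [Matrix.of_apply]
  have hint : (∫ ω, ((Qmat nr ns (edge 0 ω))ᵀ * Matrix.vecMulVec (etaV nr) (etaV nr) *
        Qmat nr ns (edge 0 ω)) k l ∂P)
      = ∑ p : Fin (nr + ns) × Fin (nr + ns),
          ((Qmat nr ns p)ᵀ * Matrix.vecMulVec (etaV nr) (etaV nr) * Qmat nr ns p) k l *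
            (P (edge 0 ⁻¹' {p})).toReal :=
    gq_integral_comp P (edge 0) (hmeas 0)
      (fun p => ((Qmat nr ns p)ᵀ * Matrix.vecMulVec (etaV nr) (etaV nr) * Qmat nr ns p) k l)
  rw [hint]
  have hw : ∀ p : Fin (nr + ns) × Fin (nr + ns), (P (edge 0 ⁻¹' {p})).toReal
      = if (p.1 : ℕ) < (p.2 : ℕ) then A p.1 p.2 / alphaW nr ns A else 0 := by
    intro p
    by_cases hp : (p.1 : ℕ) < (p.2 : ℕ)
    · rw [if_pos hp]
      have hset : edge 0 ⁻¹' {p} = {ω | edge 0 ω = (p.1, p.2)} := by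
        rw [Prod.mk.eta]; rfl
      rw [hset, hdist 0 p.1 p.2 hp,
        ENNReal.toReal_ofReal (div_nonneg (hA_nonneg _ _ hp) hα_pos.le)]
    · rw [if_neg hp]
      have hempty : edge 0 ⁻¹' {p} = ∅ := by
        ext ω
        simp only [Set.mem_preimage, Set.mem_singleton_iff, Set.mem_empty_iff_false,
          iff_false]
        intro h
        exact hp (h ▸ hlt 0 ω)
      rw [hempty]
      simp
  simp_rw [hw]
  rw [Fintype.sum_prod_type]
  -- closed form for the Q-columns in each case, and the key per-pair identity
  have key : ∀ i j : Fin (nr + ns),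
      ((Qmat nr ns (i, j))ᵀ * Matrix.vecMulVec (etaV nr) (etaV nr) * Qmat nr ns (i, j)) k l *
          (if (i : ℕ) < (j : ℕ) then A i j / alphaW nr ns A else 0)
      = (if (i : ℕ) < (j : ℕ) then A i j else 0) *
            (etaV nr k * etaV nr l / alphaW nr ns A)
        + (if ((i : ℕ) < nr ∧ nr ≤ (j : ℕ)) then A i j *
            (((etaV nr k - 2⁻¹ * (1 / Real.sqrt nr) * regInd nr ns i k) *
              (etaV nr l - 2⁻¹ * (1 / Real.sqrt nr) * regInd nr ns i l) -
              etaV nr k * etaV nr l) / alphaW nr ns A) else 0) := by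
    intro i j
    by_cases hij : (i : ℕ) < (j : ℕ)
    · by_cases hjr : (j : ℕ) < nr
      · have hir : (i : ℕ) < nr := hij.trans hjr
        have hcond : ¬((i : ℕ) < nr ∧ nr ≤ (j : ℕ)) := by omega
        rw [if_pos hij, if_pos hij, if_neg hcond, add_zero]
        have hgk : (∑ a, Qmat nr ns (i, j) a k * etaV nr a) = etaV nr k := by
          rw [gq_Qcol]
          simp [hir, hjr]
        have hgl : (∑ a, Qmat nr ns (i, j) a l * etaV nr a) = etaV nr l := by
          rw [gq_Qcol]
          simp [hir, hjr]
        rw [gq_entry, hgk, hgl]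
        ring
      · by_cases hir : (i : ℕ) < nr
        · have hcond : (i : ℕ) < nr ∧ nr ≤ (j : ℕ) := ⟨hir, le_of_not_gt hjr⟩
          rw [if_pos hij, if_pos hij, if_pos hcond]
          have hrj : ∀ m : Fin nr, regInd nr ns j m = 0 := by
            intro m
            rw [regInd, if_neg]
            have := m.isLt; omega
          have hgk : (∑ a, Qmat nr ns (i, j) a k * etaV nr a)
              = etaV nr k - 2⁻¹ * (1 / Real.sqrt nr) * regInd nr ns i k := by
            rw [gq_Qcol]
            simp only [if_pos hir, if_neg hjr, hrj, sub_zero]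
            ring
          have hgl : (∑ a, Qmat nr ns (i, j) a l * etaV nr a)
              = etaV nr l - 2⁻¹ * (1 / Real.sqrt nr) * regInd nr ns i l := by
            rw [gq_Qcol]
            simp only [if_pos hir, if_neg hjr, hrj, sub_zero]
            ring
          rw [gq_entry, hgk, hgl]
          ring
        · have h0 : A i j = 0 := hA_ss i j (le_of_not_gt hir) (le_of_not_gt hjr)
          rw [if_pos hij, if_pos hij, h0]
          simp
    · have hcond : ¬((i : ℕ) < nr ∧ nr ≤ (j : ℕ)) := by omega
      rw [if_neg hij, if_neg hij, if_neg hcond]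
      simp
  refine Eq.trans (Finset.sum_congr rfl fun i _ => Finset.sum_congr rfl fun j _ =>
    key i j) ?_
  simp only [Finset.sum_add_distrib]
  -- part 1
  have p1 : (∑ i : Fin (nr + ns), ∑ j : Fin (nr + ns),
        (if (i : ℕ) < (j : ℕ) then A i j else 0) *
          (etaV nr k * etaV nr l / alphaW nr ns A))
      = alphaW nr ns A * (etaV nr k * etaV nr l / alphaW nr ns A) := by
    simp_rw [← Finset.sum_mul]
    rfl
  rw [p1]
  -- part 2: inner sums
  have p2 : ∀ i : Fin (nr + ns), (∑ j : Fin (nr + ns),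
        (if ((i : ℕ) < nr ∧ nr ≤ (j : ℕ)) then A i j *
            (((etaV nr k - 2⁻¹ * (1 / Real.sqrt nr) * regInd nr ns i k) *
              (etaV nr l - 2⁻¹ * (1 / Real.sqrt nr) * regInd nr ns i l) -
              etaV nr k * etaV nr l) / alphaW nr ns A) else 0))
      = if (i : ℕ) < nr then ls *
            (((etaV nr k - 2⁻¹ * (1 / Real.sqrt nr) * regInd nr ns i k) *
              (etaV nr l - 2⁻¹ * (1 / Real.sqrt nr) * regInd nr ns i l) -
              etaV nr k * etaV nr l) / alphaW nr ns A) else 0 := by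
    intro i
    by_cases hir : (i : ℕ) < nr
    · rw [if_pos hir]
      have hstep : ∀ j : Fin (nr + ns),
          (if ((i : ℕ) < nr ∧ nr ≤ (j : ℕ)) then A i j *
              (((etaV nr k - 2⁻¹ * (1 / Real.sqrt nr) * regInd nr ns i k) *
                (etaV nr l - 2⁻¹ * (1 / Real.sqrt nr) * regInd nr ns i l) -
                etaV nr k * etaV nr l) / alphaW nr ns A) else 0)
          = (if nr ≤ (j : ℕ) then A i j else 0) *
              (((etaV nr k - 2⁻¹ * (1 / Real.sqrt nr) * regInd nr ns i k) *
                (etaV nr l - 2⁻¹ * (1 / Real.sqrt nr) * regInd nr ns i l) -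
                etaV nr k * etaV nr l) / alphaW nr ns A) := by
        intro j
        by_cases hj : nr ≤ (j : ℕ) <;> simp [hir, hj]
      rw [Finset.sum_congr rfl fun j _ => hstep j, ← Finset.sum_mul,
        ← Finset.sum_filter, hA_rowsum i hir]
    · rw [if_neg hir, Finset.sum_eq_zero]
      intro j _
      exact if_neg fun h => hir h.1
  rw [Finset.sum_congr rfl fun i _ => p2 i]
  -- split the remaining single sum into delta pieces
  have hklt : (k : ℕ) < nr + ns := lt_of_lt_of_le k.isLt (Nat.le_add_right nr ns)
  have hllt : (l : ℕ) < nr + ns := lt_of_lt_of_le l.isLt (Nat.le_add_right nr ns)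
  have split : ∀ i : Fin (nr + ns),
      (if (i : ℕ) < nr then ls *
          (((etaV nr k - 2⁻¹ * (1 / Real.sqrt nr) * regInd nr ns i k) *
            (etaV nr l - 2⁻¹ * (1 / Real.sqrt nr) * regInd nr ns i l) -
            etaV nr k * etaV nr l) / alphaW nr ns A) else 0)
      = (if (k : ℕ) = (i : ℕ) then ls *
            ((-(2⁻¹ * (1 / Real.sqrt nr) * etaV nr l) +
              (2⁻¹ * (1 / Real.sqrt nr)) * (2⁻¹ * (1 / Real.sqrt nr)) *
                (if (l : ℕ) = (i : ℕ) then (1:ℝ) else 0)) / alphaW nr ns A) else 0)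
        + (if (l : ℕ) = (i : ℕ) then ls *
            (-(2⁻¹ * (1 / Real.sqrt nr) * etaV nr k) / alphaW nr ns A) else 0) := by
    intro i
    have hk := k.isLt
    have hl := l.isLt
    by_cases h1 : (k : ℕ) = (i : ℕ) <;> by_cases h2 : (l : ℕ) = (i : ℕ) <;>
      by_cases h3 : (i : ℕ) < nr <;>
      first
        | omega
        | (simp only [regInd, if_pos, if_neg, h1, h2, h3, if_true, if_false,
            eq_self_iff_true]
           ring)
  rw [Finset.sum_congr rfl fun i _ => split i, Finset.sum_add_distrib,
    gq_sum_delta' (nr + ns) (k : ℕ) hklt, gq_sum_delta' (nr + ns) (l : ℕ) hllt]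
  -- final scalar computation
  simp only [Matrix.add_apply, Matrix.smul_apply, Matrix.vecMulVec_apply,
    Matrix.one_apply, smul_eq_mul]
  have hδ : (if (l : ℕ) = ((⟨(k : ℕ), hklt⟩ : Fin (nr + ns)) : ℕ) then (1:ℝ) else 0)
      = (if k = l then (1:ℝ) else 0) := by
    by_cases h : k = l
    · rw [if_pos h, if_pos]
      exact congrArg Fin.val h.symm
    · rw [if_neg h, if_neg]
      exact fun hh => h (Fin.ext hh.symm)
  rw [hδ, hl1]
  simp only [etaV]
  set s := Real.sqrt nr with hs
  have hs2 : s * s = (nr : ℝ) := Real.mul_self_sqrt (Nat.cast_nonneg nr)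
  rw [← hs2]
  by_cases hkl : k = l
  · simp only [if_pos hkl]
    field_simp
    ring
  · simp only [if_neg hkl]
    field_simp
    ring


end
end

section
/- Under the gossip model setup, the one-step update matrix Q(0) satisfies the identity E{Q(0)^T ξξ^T Q(0)} = (1 − 2λ2)·ξξ^T + (λ1/(2 r0 n))·I_{r0 n} + (2(λ2 − λ1)/(r0 n))·(ξξ^T + Γ/2), where Γ := I_{r0 n} − ηη^T − ξξ^T. -/
open MeasureTheory ProbabilityTheory Matrix Finset Filter

set_option autoImplicit false
set_option linter.unusedVariables false

noncomputable section

lemma integral_comp_finite {Ω : Type} [MeasurableSpace Ω] (P : Measure Ω) [IsProbabilityMeasure P]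
    {E : Type} [Fintype E] [MeasurableSpace E] [MeasurableSingletonClass E]
    (X : Ω → E) (hX : Measurable X) (f : E → ℝ) :
    ∫ ω, f (X ω) ∂P = ∑ e, (P {ω | X ω = e}).toReal * f e := by
  have hf : Measurable f := measurable_of_countable f
  rw [← integral_map hX.aemeasurable hf.aestronglyMeasurable,
    integral_fintype .of_finite]
  refine Finset.sum_congr rfl fun e _ => ?_
  rw [measureReal_def, Measure.map_apply hX (measurableSet_singleton e)]
  simp [Set.preimage, smul_eq_mul, mul_comm]

namespace GQI
variable {nr ns : ℕ}

def xt (nr ns : ℕ) (m : Fin (nr + ns)) : ℝ := ∑ a, xiV nr a * regInd nr ns m a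

lemma regInd_castAdd (i : Fin nr) :
    regInd nr ns (Fin.castAdd ns i) = fun a => if a = i then 1 else 0 := by
  funext a; simp [regInd, Fin.ext_iff]

lemma regInd_natAdd (j : Fin ns) : regInd nr ns (Fin.natAdd nr j) = fun _ => 0 := by
  funext a
  have := a.isLt
  simp only [regInd, Fin.natAdd_mk, Fin.coe_natAdd]
  rw [if_neg]; omega

lemma xt_castAdd (i : Fin nr) : xt nr ns (Fin.castAdd ns i) = xiV nr i := by
  simp [xt, regInd_castAdd, mul_ite]

lemma xt_natAdd (j : Fin ns) : xt nr ns (Fin.natAdd nr j) = 0 := by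
  simp [xt, regInd_natAdd]

lemma sum_regInd (F : Fin (nr + ns) → ℝ) (k : Fin nr) :
    ∑ m, F m * regInd nr ns m k = F (Fin.castAdd ns k) := by
  have h : ∀ m : Fin (nr + ns), regInd nr ns m k = if m = Fin.castAdd ns k then 1 else 0 := by
    intro m
    simp [regInd, Fin.ext_iff, eq_comm]
  simp [h, mul_ite]

lemma card_filter_lt (h : nr / 2 ≤ nr) :
    (univ.filter fun a : Fin nr => (a : ℕ) < nr / 2).card = nr / 2 := by
  have : (univ.filter fun a : Fin nr => (a : ℕ) < nr / 2) =
      Finset.map (Fin.castLEEmb h) univ := by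
    ext a
    simp only [mem_filter, mem_univ, true_and, Finset.mem_map, Fin.castLEEmb_apply]
    constructor
    · intro ha; exact ⟨⟨(a : ℕ), ha⟩, rfl⟩
    · rintro ⟨b, rfl⟩; exact b.isLt
  rw [this, Finset.card_map]; simp

lemma card_filter_ge (h : nr / 2 ≤ nr) :
    (univ.filter fun a : Fin nr => ¬ (a : ℕ) < nr / 2).card = nr - nr / 2 := by
  have h2 := Finset.card_filter_add_card_filter_not
    (s := (univ : Finset (Fin nr))) (p := fun a : Fin nr => (a : ℕ) < nr / 2)
  rw [card_filter_lt h] at h2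
  simp only [Finset.card_univ, Fintype.card_fin] at h2
  omega

variable (A : Matrix (Fin (nr + ns)) (Fin (nr + ns)) ℝ) (ldr ls : ℝ)

lemma rowXi (hnr_even : Even nr) (hnr_pos : 0 < nr)
    (hA_diff : ∀ i j : Fin (nr + ns), (i : ℕ) < nr → (j : ℕ) < nr →
      ¬(((i : ℕ) < nr / 2) ↔ ((j : ℕ) < nr / 2)) → A i j = ldr)
    (k : Fin nr)
    (hrow : ∑ b : Fin ns, A (Fin.castAdd ns k) (Fin.natAdd nr b) = ls) :
    ∑ m, A (Fin.castAdd ns k) m * (xiV nr k - xt nr ns m) = (ldr * nr + ls) * xiV nr k := by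
  have hsq : Real.sqrt nr ≠ 0 := by
    positivity
  have h2 : nr / 2 * 2 = nr := Nat.div_mul_cancel hnr_even.two_dvd
  have hc : ((nr / 2 : ℕ) : ℝ) * 2 = (nr : ℝ) := by exact_mod_cast congrArg Nat.cast h2
  rw [Fin.sum_univ_add]
  have hstub : ∑ b : Fin ns, A (Fin.castAdd ns k) (Fin.natAdd nr b) *
      (xiV nr k - xt nr ns (Fin.natAdd nr b)) = ls * xiV nr k := by
    simp only [xt_natAdd, sub_zero]
    rw [← Finset.sum_mul, hrow]
  have hreg : ∑ a : Fin nr, A (Fin.castAdd ns k) (Fin.castAdd ns a) *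
      (xiV nr k - xt nr ns (Fin.castAdd ns a)) = ldr * nr * xiV nr k := by
    by_cases hk : (k : ℕ) < nr / 2
    · have hterm : ∀ a : Fin nr, A (Fin.castAdd ns k) (Fin.castAdd ns a) *
          (xiV nr k - xt nr ns (Fin.castAdd ns a)) =
          if (a : ℕ) < nr / 2 then 0 else ldr * (2 / Real.sqrt nr) := by
        intro a; rw [xt_castAdd]
        by_cases ha : (a : ℕ) < nr / 2
        · rw [if_pos ha]
          have : xiV nr a = xiV nr k := by simp [xiV, ha, hk]
          rw [this]; ring
        · rw [if_neg ha]
          have hA : A (Fin.castAdd ns k) (Fin.castAdd ns a) = ldr :=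
            hA_diff _ _ (by simpa using k.isLt) (by simpa using a.isLt) (by simp [hk, ha])
          rw [hA]
          simp only [xiV, if_pos hk, if_neg ha]
          ring
      rw [Finset.sum_congr rfl fun a _ => hterm a, Finset.sum_ite, Finset.sum_const,
        Finset.sum_const, card_filter_ge (Nat.div_le_self _ _)]
      have hxk : xiV nr k = 1 / Real.sqrt nr := by simp [xiV, hk]
      have hcard : ((nr - nr / 2 : ℕ) : ℝ) = ((nr / 2 : ℕ) : ℝ) := by
        congr 1; omega
      rw [hxk]
      have hhalf : ((nr - nr / 2 : ℕ) : ℝ) = (nr : ℝ) / 2 := by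
        rw [hcard]; linarith [hc]
      simp only [smul_zero, nsmul_eq_mul, zero_add, hhalf]
      ring
    · have hterm : ∀ a : Fin nr, A (Fin.castAdd ns k) (Fin.castAdd ns a) *
          (xiV nr k - xt nr ns (Fin.castAdd ns a)) =
          if (a : ℕ) < nr / 2 then ldr * (-2 / Real.sqrt nr) else 0 := by
        intro a; rw [xt_castAdd]
        by_cases ha : (a : ℕ) < nr / 2
        · rw [if_pos ha]
          have hA : A (Fin.castAdd ns k) (Fin.castAdd ns a) = ldr :=
            hA_diff _ _ (by simpa using k.isLt) (by simpa using a.isLt) (by simp [hk, ha])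
          rw [hA]
          simp only [xiV, if_neg hk, if_pos ha]
          ring
        · rw [if_neg ha]
          have : xiV nr a = xiV nr k := by simp [xiV, ha, hk]
          rw [this]; ring
      rw [Finset.sum_congr rfl fun a _ => hterm a, Finset.sum_ite, Finset.sum_const,
        Finset.sum_const, card_filter_lt (Nat.div_le_self _ _)]
      have hxk : xiV nr k = -1 / Real.sqrt nr := by simp [xiV, hk]
      rw [hxk]
      have hhalf : ((nr / 2 : ℕ) : ℝ) = (nr : ℝ) / 2 := by linarith [hc]
      simp only [smul_zero, nsmul_eq_mul, add_zero, hhalf]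
      ring
  rw [hreg, hstub]; ring

lemma rowXiSq (hnr_even : Even nr) (hnr_pos : 0 < nr)
    (hA_diff : ∀ i j : Fin (nr + ns), (i : ℕ) < nr → (j : ℕ) < nr →
      ¬(((i : ℕ) < nr / 2) ↔ ((j : ℕ) < nr / 2)) → A i j = ldr)
    (k : Fin nr)
    (hrow : ∑ b : Fin ns, A (Fin.castAdd ns k) (Fin.natAdd nr b) = ls) :
    ∑ m, A (Fin.castAdd ns k) m * (xiV nr k - xt nr ns m) ^ 2 =
      2 * ldr + ls * ((nr : ℝ))⁻¹ := by
  have hnrR : (0 : ℝ) < (nr : ℝ) := by exact_mod_cast hnr_pos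
  have hsq : Real.sqrt nr ^ 2 = (nr : ℝ) := Real.sq_sqrt (by positivity)
  have hsqne : Real.sqrt nr ≠ 0 := by positivity
  have h2 : nr / 2 * 2 = nr := Nat.div_mul_cancel hnr_even.two_dvd
  have hc : ((nr / 2 : ℕ) : ℝ) * 2 = (nr : ℝ) := by exact_mod_cast congrArg Nat.cast h2
  rw [Fin.sum_univ_add]
  have hxk2 : xiV nr k ^ 2 = ((nr : ℝ))⁻¹ := by
    by_cases hk : (k : ℕ) < nr / 2 <;>
      · simp only [xiV, hk, if_true, if_false, div_pow, hsq]
        field_simp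
  have hstub : ∑ b : Fin ns, A (Fin.castAdd ns k) (Fin.natAdd nr b) *
      (xiV nr k - xt nr ns (Fin.natAdd nr b)) ^ 2 = ls * ((nr : ℝ))⁻¹ := by
    simp only [xt_natAdd, sub_zero]
    rw [← Finset.sum_mul, hrow, hxk2]
  have hreg : ∑ a : Fin nr, A (Fin.castAdd ns k) (Fin.castAdd ns a) *
      (xiV nr k - xt nr ns (Fin.castAdd ns a)) ^ 2 = 2 * ldr := by
    have hterm : ∀ a : Fin nr, A (Fin.castAdd ns k) (Fin.castAdd ns a) *
        (xiV nr k - xt nr ns (Fin.castAdd ns a)) ^ 2 =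
        if (((a : ℕ) < nr / 2) ↔ ((k : ℕ) < nr / 2)) then 0 else ldr * (4 / (nr : ℝ)) := by
      intro a; rw [xt_castAdd]
      by_cases ha : (a : ℕ) < nr / 2 <;> by_cases hk : (k : ℕ) < nr / 2
      · rw [if_pos (by simp [ha, hk])]
        have : xiV nr a = xiV nr k := by simp [xiV, ha, hk]
        rw [this]; ring
      · rw [if_neg (by simp [ha, hk])]
        have hA : A (Fin.castAdd ns k) (Fin.castAdd ns a) = ldr :=
          hA_diff _ _ (by simpa using k.isLt) (by simpa using a.isLt) (by simp [hk, ha])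
        rw [hA]
        simp only [xiV, if_neg hk, if_pos ha]
        rw [div_sub_div_same]
        rw [div_pow, hsq]
        norm_num
      · rw [if_neg (by simp [ha, hk])]
        have hA : A (Fin.castAdd ns k) (Fin.castAdd ns a) = ldr :=
          hA_diff _ _ (by simpa using k.isLt) (by simpa using a.isLt) (by simp [hk, ha])
        rw [hA]
        simp only [xiV, if_pos hk, if_neg ha]
        rw [div_sub_div_same]
        rw [div_pow, hsq]
        norm_num
      · rw [if_pos (by simp [ha, hk])]
        have : xiV nr a = xiV nr k := by simp [xiV, ha, hk]
        rw [this]; ring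
    rw [Finset.sum_congr rfl fun a _ => hterm a, Finset.sum_ite, Finset.sum_const,
      Finset.sum_const]
    have hcard : (univ.filter fun a : Fin nr =>
        ¬(((a : ℕ) < nr / 2) ↔ ((k : ℕ) < nr / 2))).card = nr / 2 := by
      by_cases hk : (k : ℕ) < nr / 2
      · rw [show (univ.filter fun a : Fin nr => ¬(((a : ℕ) < nr / 2) ↔ ((k : ℕ) < nr / 2)))
            = univ.filter fun a : Fin nr => ¬(a : ℕ) < nr / 2 by
          apply Finset.filter_congr; intro a _; simp [hk]]
        rw [card_filter_ge (Nat.div_le_self _ _)]; omega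
      · rw [show (univ.filter fun a : Fin nr => ¬(((a : ℕ) < nr / 2) ↔ ((k : ℕ) < nr / 2)))
            = univ.filter fun a : Fin nr => (a : ℕ) < nr / 2 by
          apply Finset.filter_congr; intro a _; simp [hk]]
        exact card_filter_lt (Nat.div_le_self _ _)
    rw [hcard]
    have hhalf : ((nr / 2 : ℕ) : ℝ) = (nr : ℝ) / 2 := by linarith [hc]
    simp only [nsmul_eq_mul, smul_zero, zero_add, hhalf]
    field_simp
    ring
  rw [hreg, hstub]


lemma rowsum_natAdd (i : Fin (nr + ns))
    (h : (∑ j ∈ Finset.univ.filter (fun j : Fin (nr + ns) => nr ≤ (j : ℕ)), A i j) = ls) :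
    ∑ b : Fin ns, A i (Fin.natAdd nr b) = ls := by
  rw [← h, Finset.sum_filter, Fin.sum_univ_add]
  have h1 : ∀ a : Fin nr,
      (if nr ≤ ((Fin.castAdd ns a : Fin (nr + ns)) : ℕ) then A i (Fin.castAdd ns a) else 0) = 0 :=
    fun a => if_neg (by simpa using a.isLt)
  have h2 : ∀ b : Fin ns,
      (if nr ≤ ((Fin.natAdd nr b : Fin (nr + ns)) : ℕ) then A i (Fin.natAdd nr b) else 0)
        = A i (Fin.natAdd nr b) := fun b => if_pos (by simp)
  simp only [h1, h2, Finset.sum_const, smul_zero, zero_add]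

lemma twoAlpha (hsym : A.IsSymm) (hdiag : ∀ i, A i i = 0) :
    ∑ i, ∑ j, A i j = 2 * alphaW nr ns A := by
  have key : ∀ i j : Fin (nr + ns), A i j =
      (if (i : ℕ) < (j : ℕ) then A i j else 0) + (if (j : ℕ) < (i : ℕ) then A i j else 0) := by
    intro i j
    rcases lt_trichotomy (i : ℕ) (j : ℕ) with h | h | h
    · rw [if_pos h, if_neg (by omega), add_zero]
    · have : i = j := Fin.ext h
      subst this
      simp [hdiag]
    · rw [if_neg (by omega), if_pos h, zero_add]
  have hsplit : ∑ i, ∑ j, A i j =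
      (∑ i : Fin (nr + ns), ∑ j : Fin (nr + ns), if (i : ℕ) < (j : ℕ) then A i j else 0) +
      (∑ i : Fin (nr + ns), ∑ j : Fin (nr + ns), if (j : ℕ) < (i : ℕ) then A i j else 0) := by
    rw [← Finset.sum_add_distrib]
    refine Finset.sum_congr rfl fun i _ => ?_
    rw [← Finset.sum_add_distrib]
    exact Finset.sum_congr rfl fun j _ => key i j
  have hsecond : (∑ i : Fin (nr + ns), ∑ j : Fin (nr + ns), if (j : ℕ) < (i : ℕ) then A i j else 0) =
      alphaW nr ns A := by
    rw [Finset.sum_comm]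
    refine Finset.sum_congr rfl fun j _ => Finset.sum_congr rfl fun i _ => ?_
    rw [hsym.apply]
  rw [hsplit, hsecond]
  unfold alphaW
  ring

lemma half_sum {N : ℕ} (f : Fin N → Fin N → ℝ) (hsymf : ∀ i j, f i j = f j i)
    (hdiagf : ∀ i, f i i = 0) :
    ∑ i : Fin N, ∑ j : Fin N, (if (i : ℕ) < (j : ℕ) then f i j else 0) =
      2⁻¹ * (∑ i : Fin N, ∑ j : Fin N, f i j) := by
  have key : ∀ i j : Fin N, f i j =
      (if (i : ℕ) < (j : ℕ) then f i j else 0) + (if (j : ℕ) < (i : ℕ) then f i j else 0) := by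
    intro i j
    rcases lt_trichotomy (i : ℕ) (j : ℕ) with h | h | h
    · rw [if_pos h, if_neg (by omega), add_zero]
    · have : i = j := Fin.ext h
      subst this
      simp [hdiagf]
    · rw [if_neg (by omega), if_pos h, zero_add]
  have hsplit : ∑ i, ∑ j, f i j =
      (∑ i : Fin N, ∑ j : Fin N, if (i : ℕ) < (j : ℕ) then f i j else 0) +
      (∑ i : Fin N, ∑ j : Fin N, if (j : ℕ) < (i : ℕ) then f i j else 0) := by
    rw [← Finset.sum_add_distrib]
    refine Finset.sum_congr rfl fun i _ => ?_
    rw [← Finset.sum_add_distrib]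
    exact Finset.sum_congr rfl fun j _ => key i j
  have hsecond : (∑ i : Fin N, ∑ j : Fin N, if (j : ℕ) < (i : ℕ) then f i j else 0) =
      (∑ i : Fin N, ∑ j : Fin N, if (i : ℕ) < (j : ℕ) then f i j else 0) := by
    rw [Finset.sum_comm]
    refine Finset.sum_congr rfl fun j _ => Finset.sum_congr rfl fun i _ => ?_
    rw [hsymf]
  rw [hsecond] at hsplit
  linarith

lemma sumC (hsym : A.IsSymm) (k : Fin nr) :
    ∑ i, ∑ j, A i j * ((xt nr ns i - xt nr ns j) * (regInd nr ns i k - regInd nr ns j k)) =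
      2 * ∑ m, A (Fin.castAdd ns k) m * (xiV nr k - xt nr ns m) := by
  have expand : ∀ i j : Fin (nr + ns),
      A i j * ((xt nr ns i - xt nr ns j) * (regInd nr ns i k - regInd nr ns j k)) =
        (A i j * (xt nr ns i - xt nr ns j)) * regInd nr ns i k -
        (A i j * (xt nr ns i - xt nr ns j)) * regInd nr ns j k := by
    intro i j; ring
  simp_rw [expand, Finset.sum_sub_distrib]
  have h1 : ∑ i, ∑ j, (A i j * (xt nr ns i - xt nr ns j)) * regInd nr ns i k =
      ∑ m, A (Fin.castAdd ns k) m * (xiV nr k - xt nr ns m) := by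
    have hp : ∀ i, ∑ j, (A i j * (xt nr ns i - xt nr ns j)) * regInd nr ns i k =
        (∑ j, A i j * (xt nr ns i - xt nr ns j)) * regInd nr ns i k := fun i =>
      (Finset.sum_mul _ _ _).symm
    simp_rw [hp]
    rw [sum_regInd (fun i => ∑ j, A i j * (xt nr ns i - xt nr ns j)) k]
    simp_rw [xt_castAdd]
  have h2 : ∑ i, ∑ j, (A i j * (xt nr ns i - xt nr ns j)) * regInd nr ns j k =
      -∑ m, A (Fin.castAdd ns k) m * (xiV nr k - xt nr ns m) := by
    rw [Finset.sum_comm]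
    have hp : ∀ j, ∑ i, (A i j * (xt nr ns i - xt nr ns j)) * regInd nr ns j k =
        (∑ i, A i j * (xt nr ns i - xt nr ns j)) * regInd nr ns j k := fun j =>
      (Finset.sum_mul _ _ _).symm
    simp_rw [hp]
    rw [sum_regInd (fun j => ∑ i, A i j * (xt nr ns i - xt nr ns j)) k]
    rw [← Finset.sum_neg_distrib]
    refine Finset.sum_congr rfl fun i _ => ?_
    rw [hsym.apply (Fin.castAdd ns k) i, xt_castAdd]
    ring
  rw [h1, h2]
  ring

lemma sumUdiag (hsym : A.IsSymm) (hdiag : ∀ i, A i i = 0) (k : Fin nr) :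
    ∑ i, ∑ j, A i j * ((xt nr ns i - xt nr ns j) ^ 2 *
      ((regInd nr ns i k - regInd nr ns j k) * (regInd nr ns i k - regInd nr ns j k))) =
      2 * ∑ m, A (Fin.castAdd ns k) m * (xiV nr k - xt nr ns m) ^ 2 := by
  have dsq : ∀ m : Fin (nr + ns), regInd nr ns m k * regInd nr ns m k = regInd nr ns m k := by
    intro m; unfold regInd; split <;> norm_num
  have expand : ∀ i j : Fin (nr + ns),
      A i j * ((xt nr ns i - xt nr ns j) ^ 2 *
        ((regInd nr ns i k - regInd nr ns j k) * (regInd nr ns i k - regInd nr ns j k))) =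
      (A i j * (xt nr ns i - xt nr ns j) ^ 2) * regInd nr ns i k +
      (A i j * (xt nr ns i - xt nr ns j) ^ 2) * regInd nr ns j k -
      2 * ((A i j * (xt nr ns i - xt nr ns j) ^ 2 * regInd nr ns i k) * regInd nr ns j k) := by
    intro i j
    linear_combination (A i j * (xt nr ns i - xt nr ns j) ^ 2) * dsq i +
      (A i j * (xt nr ns i - xt nr ns j) ^ 2) * dsq j
  simp only [expand, Finset.sum_sub_distrib, Finset.sum_add_distrib]
  have ha : ∑ i, ∑ j, (A i j * (xt nr ns i - xt nr ns j) ^ 2) * regInd nr ns i k =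
      ∑ m, A (Fin.castAdd ns k) m * (xiV nr k - xt nr ns m) ^ 2 := by
    have hp : ∀ i, ∑ j, (A i j * (xt nr ns i - xt nr ns j) ^ 2) * regInd nr ns i k =
        (∑ j, A i j * (xt nr ns i - xt nr ns j) ^ 2) * regInd nr ns i k := fun i =>
      (Finset.sum_mul _ _ _).symm
    simp_rw [hp]
    rw [sum_regInd (fun i => ∑ j, A i j * (xt nr ns i - xt nr ns j) ^ 2) k]
    simp_rw [xt_castAdd]
  have hb : ∑ i, ∑ j, (A i j * (xt nr ns i - xt nr ns j) ^ 2) * regInd nr ns j k =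
      ∑ m, A (Fin.castAdd ns k) m * (xiV nr k - xt nr ns m) ^ 2 := by
    rw [Finset.sum_comm]
    have hp : ∀ j, ∑ i, (A i j * (xt nr ns i - xt nr ns j) ^ 2) * regInd nr ns j k =
        (∑ i, A i j * (xt nr ns i - xt nr ns j) ^ 2) * regInd nr ns j k := fun j =>
      (Finset.sum_mul _ _ _).symm
    simp_rw [hp]
    rw [sum_regInd (fun j => ∑ i, A i j * (xt nr ns i - xt nr ns j) ^ 2) k]
    refine Finset.sum_congr rfl fun i _ => ?_
    rw [hsym.apply (Fin.castAdd ns k) i, xt_castAdd]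
    ring
  have hc : ∑ i, ∑ j, (A i j * (xt nr ns i - xt nr ns j) ^ 2 * regInd nr ns i k) *
      regInd nr ns j k = 0 := by
    have hp : ∀ i, ∑ j, (A i j * (xt nr ns i - xt nr ns j) ^ 2 * regInd nr ns i k) *
        regInd nr ns j k =
        (A i (Fin.castAdd ns k) * (xt nr ns i - xt nr ns (Fin.castAdd ns k)) ^ 2 *
          regInd nr ns i k) := fun i =>
      sum_regInd (fun j => A i j * (xt nr ns i - xt nr ns j) ^ 2 * regInd nr ns i k) k
    simp_rw [hp]
    rw [sum_regInd (fun i => A i (Fin.castAdd ns k) *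
      (xt nr ns i - xt nr ns (Fin.castAdd ns k)) ^ 2) k]
    rw [hdiag]
    ring
  have hc2 : ∑ i : Fin (nr + ns), ∑ j : Fin (nr + ns),
      2 * (A i j * (xt nr ns i - xt nr ns j) ^ 2 * regInd nr ns i k * regInd nr ns j k) =
      2 * ∑ i : Fin (nr + ns), ∑ j : Fin (nr + ns),
        A i j * (xt nr ns i - xt nr ns j) ^ 2 * regInd nr ns i k * regInd nr ns j k := by
    simp_rw [← Finset.mul_sum]
  rw [hc2, ha, hb, hc]
  ring

lemma sumUoff (hsym : A.IsSymm) (k l : Fin nr) (hkl : k ≠ l) :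
    ∑ i, ∑ j, A i j * ((xt nr ns i - xt nr ns j) ^ 2 *
      ((regInd nr ns i k - regInd nr ns j k) * (regInd nr ns i l - regInd nr ns j l))) =
      -2 * (A (Fin.castAdd ns k) (Fin.castAdd ns l) * (xiV nr k - xiV nr l) ^ 2) := by
  have dzero : ∀ m : Fin (nr + ns), regInd nr ns m k * regInd nr ns m l = 0 := by
    intro m
    unfold regInd
    by_cases h1 : (k : ℕ) = (m : ℕ)
    · by_cases h2 : (l : ℕ) = (m : ℕ)
      · exact absurd (Fin.ext (h1.trans h2.symm)) hkl
      · simp [h2]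
    · simp [h1]
  have expand : ∀ i j : Fin (nr + ns),
      A i j * ((xt nr ns i - xt nr ns j) ^ 2 *
        ((regInd nr ns i k - regInd nr ns j k) * (regInd nr ns i l - regInd nr ns j l))) =
      -((A i j * (xt nr ns i - xt nr ns j) ^ 2 * regInd nr ns i k) * regInd nr ns j l) -
       ((A i j * (xt nr ns i - xt nr ns j) ^ 2 * regInd nr ns i l) * regInd nr ns j k) := by
    intro i j
    linear_combination (A i j * (xt nr ns i - xt nr ns j) ^ 2) * dzero i +
      (A i j * (xt nr ns i - xt nr ns j) ^ 2) * dzero j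
  simp_rw [expand, Finset.sum_sub_distrib, Finset.sum_neg_distrib]
  have hc1 : ∑ i, ∑ j, (A i j * (xt nr ns i - xt nr ns j) ^ 2 * regInd nr ns i k) *
      regInd nr ns j l =
      A (Fin.castAdd ns k) (Fin.castAdd ns l) * (xiV nr k - xiV nr l) ^ 2 := by
    have hp : ∀ i, ∑ j, (A i j * (xt nr ns i - xt nr ns j) ^ 2 * regInd nr ns i k) *
        regInd nr ns j l =
        (A i (Fin.castAdd ns l) * (xt nr ns i - xt nr ns (Fin.castAdd ns l)) ^ 2 *
          regInd nr ns i k) := fun i =>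
      sum_regInd (fun j => A i j * (xt nr ns i - xt nr ns j) ^ 2 * regInd nr ns i k) l
    simp_rw [hp]
    rw [sum_regInd (fun i => A i (Fin.castAdd ns l) *
      (xt nr ns i - xt nr ns (Fin.castAdd ns l)) ^ 2) k]
    rw [xt_castAdd, xt_castAdd]
  have hc2 : ∑ i, ∑ j, (A i j * (xt nr ns i - xt nr ns j) ^ 2 * regInd nr ns i l) *
      regInd nr ns j k =
      A (Fin.castAdd ns k) (Fin.castAdd ns l) * (xiV nr k - xiV nr l) ^ 2 := by
    have hp : ∀ i, ∑ j, (A i j * (xt nr ns i - xt nr ns j) ^ 2 * regInd nr ns i l) *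
        regInd nr ns j k =
        (A i (Fin.castAdd ns k) * (xt nr ns i - xt nr ns (Fin.castAdd ns k)) ^ 2 *
          regInd nr ns i l) := fun i =>
      sum_regInd (fun j => A i j * (xt nr ns i - xt nr ns j) ^ 2 * regInd nr ns i l) k
    simp_rw [hp]
    rw [sum_regInd (fun i => A i (Fin.castAdd ns k) *
      (xt nr ns i - xt nr ns (Fin.castAdd ns k)) ^ 2) l]
    rw [hsym.apply (Fin.castAdd ns k) (Fin.castAdd ns l), xt_castAdd, xt_castAdd]
    ring
  rw [hc1, hc2]
  ring

lemma gsum (e : Fin (nr + ns) × Fin (nr + ns)) (k : Fin nr) :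
    ∑ a, xiV nr a * Qmat nr ns e a k =
      xiV nr k - 2⁻¹ * ((xt nr ns e.1 - xt nr ns e.2) *
        (regInd nr ns e.1 k - regInd nr ns e.2 k)) := by
  have hQ : ∀ a, Qmat nr ns e a k = (if a = k then 1 else 0) -
      2⁻¹ * ((regInd nr ns e.1 a - regInd nr ns e.2 a) *
        (regInd nr ns e.1 k - regInd nr ns e.2 k)) := by
    intro a
    simp [Qmat, Matrix.sub_apply, Matrix.one_apply, Matrix.smul_apply, Matrix.vecMulVec_apply,
      Pi.sub_apply, smul_eq_mul]
  have key : ∀ a, xiV nr a * Qmat nr ns e a k =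
      (xiV nr a * (if a = k then 1 else 0)) -
      (2⁻¹ * (regInd nr ns e.1 k - regInd nr ns e.2 k)) *
        (xiV nr a * regInd nr ns e.1 a - xiV nr a * regInd nr ns e.2 a) := by
    intro a; rw [hQ]; ring
  have h1 : ∑ a, xiV nr a * (if a = k then 1 else 0) = xiV nr k := by
    simp [mul_ite]
  simp_rw [key, Finset.sum_sub_distrib, ← Finset.mul_sum]
  rw [h1]
  simp_rw [Finset.sum_sub_distrib]
  unfold xt
  ring

lemma Qform (e : Fin (nr + ns) × Fin (nr + ns)) (k l : Fin nr) :
    ((Qmat nr ns e)ᵀ * Matrix.vecMulVec (xiV nr) (xiV nr) * Qmat nr ns e) k l =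
      (xiV nr k - 2⁻¹ * ((xt nr ns e.1 - xt nr ns e.2) *
        (regInd nr ns e.1 k - regInd nr ns e.2 k))) *
      (xiV nr l - 2⁻¹ * ((xt nr ns e.1 - xt nr ns e.2) *
        (regInd nr ns e.1 l - regInd nr ns e.2 l))) := by
  rw [← gsum, ← gsum]
  simp only [Matrix.mul_apply, Matrix.transpose_apply, Matrix.vecMulVec_apply]
  have hinner : ∀ b, ∑ a, Qmat nr ns e a k * (xiV nr a * xiV nr b) =
      (∑ a, xiV nr a * Qmat nr ns e a k) * xiV nr b := by
    intro b
    rw [Finset.sum_mul]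
    exact Finset.sum_congr rfl fun a _ => by ring
  simp_rw [hinner]
  rw [Finset.mul_sum]
  exact Finset.sum_congr rfl fun b _ => by ring

lemma Qform' (i j : Fin (nr + ns)) (k l : Fin nr) :
    ((Qmat nr ns (i, j))ᵀ * Matrix.vecMulVec (xiV nr) (xiV nr) * Qmat nr ns (i, j)) k l =
      (xiV nr k - 2⁻¹ * ((xt nr ns i - xt nr ns j) *
        (regInd nr ns i k - regInd nr ns j k))) *
      (xiV nr l - 2⁻¹ * ((xt nr ns i - xt nr ns j) *
        (regInd nr ns i l - regInd nr ns j l))) := Qform (i, j) k l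

end GQI
set_option maxHeartbeats 1600000 in
theorem gossip_QxiQ_identity
    (nr ns : ℕ) (hnr_even : Even nr) (hnr_pos : 0 < nr) (hns_pos : 0 < ns)
    (A : Matrix (Fin (nr + ns)) (Fin (nr + ns)) ℝ)
    (hA_symm : A.IsSymm) (hA_diag : ∀ i, A i i = 0)
    (lsr ldr ls : ℝ)
    (hlsr : lsr ∈ Set.Ioo (0 : ℝ) 1) (hldr : ldr ∈ Set.Ioo (0 : ℝ) 1)
    (hls_nonneg : 0 ≤ ls)
    (hA_same : ∀ i j : Fin (nr + ns), i ≠ j → (i : ℕ) < nr → (j : ℕ) < nr →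
      (((i : ℕ) < nr / 2) ↔ ((j : ℕ) < nr / 2)) → A i j = lsr)
    (hA_diff : ∀ i j : Fin (nr + ns), (i : ℕ) < nr → (j : ℕ) < nr →
      ¬(((i : ℕ) < nr / 2) ↔ ((j : ℕ) < nr / 2)) → A i j = ldr)
    (hA_stub : ∀ i j : Fin (nr + ns), (i : ℕ) < nr → nr ≤ (j : ℕ) →
      A i j ∈ Set.Ico (0 : ℝ) 1)
    (hA_ss : ∀ i j : Fin (nr + ns), nr ≤ (i : ℕ) → nr ≤ (j : ℕ) → A i j = 0)
    (hA_rowsum : ∀ i : Fin (nr + ns), (i : ℕ) < nr →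
      (∑ j ∈ Finset.univ.filter (fun j : Fin (nr + ns) => nr ≤ (j : ℕ)), A i j) = ls)
    (Ω : Type) [MeasurableSpace Ω] (P : Measure Ω) [IsProbabilityMeasure P]
    (edge : ℕ → Ω → Fin (nr + ns) × Fin (nr + ns))
    (hmeas : ∀ t, Measurable (edge t))
    (hlt : ∀ t ω, (edge t ω).1 < (edge t ω).2)
    (hdist : ∀ (t : ℕ) (i j : Fin (nr + ns)), i < j →
      P {ω | edge t ω = (i, j)} = ENNReal.ofReal (A i j / alphaW nr ns A))
    (hindep : iIndepFun edge P)
    (l1 : ℝ) (hl1 : l1 = ls / (2 * alphaW nr ns A))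
    (l2 : ℝ) (hl2 : l2 = (ldr * (nr : ℝ) + ls) / (2 * alphaW nr ns A))
    :
    (Matrix.of fun k l => ∫ ω,
        ((Qmat nr ns (edge 0 ω))ᵀ * Matrix.vecMulVec (xiV nr) (xiV nr) *
          Qmat nr ns (edge 0 ω)) k l ∂P) =
      (1 - 2 * l2) • Matrix.vecMulVec (xiV nr) (xiV nr) +
        (l1 / (2 * (nr : ℝ))) • (1 : Matrix (Fin nr) (Fin nr) ℝ) +
        (2 * (l2 - l1) / (nr : ℝ)) •
          (Matrix.vecMulVec (xiV nr) (xiV nr) +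
            (2⁻¹ : ℝ) • ((1 : Matrix (Fin nr) (Fin nr) ℝ) -
              Matrix.vecMulVec (etaV nr) (etaV nr) - Matrix.vecMulVec (xiV nr) (xiV nr))) := by
  classical
  set α := alphaW nr ns A with hαdef
  have hnrR : (0 : ℝ) < (nr : ℝ) := by exact_mod_cast hnr_pos
  have hsqpos : (0 : ℝ) < Real.sqrt nr := Real.sqrt_pos.mpr hnrR
  have hsqne : Real.sqrt nr ≠ 0 := ne_of_gt hsqpos
  have hnrs : (nr : ℝ) = Real.sqrt nr * Real.sqrt nr := (Real.mul_self_sqrt hnrR.le).symm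
  have hnr2 : 2 ≤ nr := by
    obtain ⟨c, hc⟩ := hnr_even; omega
  -- A is nonnegative
  have hA_nonneg : ∀ i j, 0 ≤ A i j := by
    intro i j
    by_cases hi : (i : ℕ) < nr <;> by_cases hj : (j : ℕ) < nr
    · by_cases hc : ((i : ℕ) < nr / 2 ↔ (j : ℕ) < nr / 2)
      · by_cases hij : i = j
        · subst hij; rw [hA_diag]
        · rw [hA_same i j hij hi hj hc]; exact hlsr.1.le
      · rw [hA_diff i j hi hj hc]; exact hldr.1.le
    · exact (hA_stub i j hi (not_lt.1 hj)).1
    · have h0 := (hA_stub j i hj (not_lt.1 hi)).1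
      rwa [hA_symm.apply i j] at h0
    · rw [hA_ss i j (not_lt.1 hi) (not_lt.1 hj)]
  -- alpha is positive
  have hαpos : 0 < alphaW nr ns A := by
    rw [← hαdef]
    rw [hαdef]
    have h01 : (0 : ℕ) < nr + ns := by omega
    have h11 : (1 : ℕ) < nr + ns := by omega
    have hApos : 0 < A ⟨0, h01⟩ ⟨1, h11⟩ := by
      by_cases hc : (((⟨0, h01⟩ : Fin (nr + ns)) : ℕ) < nr / 2 ↔
          ((⟨1, h11⟩ : Fin (nr + ns)) : ℕ) < nr / 2)
      · rw [hA_same _ _ (by simp [Fin.ext_iff]) (show (0 : ℕ) < nr by omega)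
          (show (1 : ℕ) < nr by omega) hc]
        exact hlsr.1
      · rw [hA_diff _ _ (show (0 : ℕ) < nr by omega) (show (1 : ℕ) < nr by omega) hc]
        exact hldr.1
    unfold alphaW
    refine Finset.sum_pos' (fun i _ => Finset.sum_nonneg fun j _ => ?_)
      ⟨⟨0, h01⟩, Finset.mem_univ _, ?_⟩
    · split
      · exact hA_nonneg i j
      · exact le_refl 0
    · refine Finset.sum_pos' (fun j _ => ?_) ⟨⟨1, h11⟩, Finset.mem_univ _, ?_⟩
      · split
        · exact hA_nonneg _ j
        · exact le_refl 0
      · rw [if_pos (show (0 : ℕ) < 1 by norm_num)]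
        exact hApos
  have hαne : alphaW nr ns A ≠ 0 := ne_of_gt hαpos
  -- row sums over the stubborn block
  have hrowN : ∀ k : Fin nr, ∑ b : Fin ns, A (Fin.castAdd ns k) (Fin.natAdd nr b) = ls :=
    fun k => GQI.rowsum_natAdd A ls (Fin.castAdd ns k) (hA_rowsum _ (by simpa using k.isLt))
  have hrowXi : ∀ m : Fin nr,
      ∑ mm, A (Fin.castAdd ns m) mm * (xiV nr m - GQI.xt nr ns mm) =
        (ldr * nr + ls) * xiV nr m :=
    fun m => GQI.rowXi A ldr ls hnr_even hnr_pos hA_diff m (hrowN m)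
  have hrowXiSq : ∀ m : Fin nr,
      ∑ mm, A (Fin.castAdd ns m) mm * (xiV nr m - GQI.xt nr ns mm) ^ 2 =
        2 * ldr + ls * ((nr : ℝ))⁻¹ :=
    fun m => GQI.rowXiSq A ldr ls hnr_even hnr_pos hA_diff m (hrowN m)
  -- the probability weights
  have hw : ∀ i j : Fin (nr + ns), (P {ω | edge 0 ω = (i, j)}).toReal =
      if (i : ℕ) < (j : ℕ) then A i j / alphaW nr ns A else 0 := by
    intro i j
    by_cases hp : (i : ℕ) < (j : ℕ)
    · rw [if_pos hp, hdist 0 i j (Fin.lt_def.mpr hp),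
        ENNReal.toReal_ofReal (div_nonneg (hA_nonneg i j) hαpos.le)]
    · rw [if_neg hp]
      have hemp : {ω | edge 0 ω = (i, j)} = ∅ := by
        ext ω
        simp only [Set.mem_setOf_eq, Set.mem_empty_iff_false, iff_false]
        intro h
        have h2 := hlt 0 ω
        rw [h] at h2
        exact hp h2
      rw [hemp]
      simp
  apply Matrix.ext
  intro k l
  -- step 1: integral to weighted sum
  have hstep1 : (Matrix.of fun k l => ∫ ω,
        ((Qmat nr ns (edge 0 ω))ᵀ * Matrix.vecMulVec (xiV nr) (xiV nr) *
          Qmat nr ns (edge 0 ω)) k l ∂P) k l =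
      ∑ i : Fin (nr + ns), ∑ j : Fin (nr + ns),
        (if (i : ℕ) < (j : ℕ) then A i j / alphaW nr ns A * ((xiV nr k - 2⁻¹ * ((GQI.xt nr ns i - GQI.xt nr ns j) * (regInd nr ns i k - regInd nr ns j k))) *
        (xiV nr l - 2⁻¹ * ((GQI.xt nr ns i - GQI.xt nr ns j) * (regInd nr ns i l - regInd nr ns j l)))) else 0) := by
    rw [Matrix.of_apply]
    rw [integral_comp_finite P (edge 0) (hmeas 0)
      (fun e => ((Qmat nr ns e)ᵀ * Matrix.vecMulVec (xiV nr) (xiV nr) * Qmat nr ns e) k l)]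
    rw [Fintype.sum_prod_type]
    refine Finset.sum_congr rfl fun i _ => Finset.sum_congr rfl fun j _ => ?_
    rw [hw i j, GQI.Qform' i j k l, ite_mul, zero_mul]
  rw [hstep1]
  -- step 2: symmetrization
  rw [GQI.half_sum (fun i j => A i j / alphaW nr ns A * ((xiV nr k - 2⁻¹ * ((GQI.xt nr ns i - GQI.xt nr ns j) * (regInd nr ns i k - regInd nr ns j k))) *
        (xiV nr l - 2⁻¹ * ((GQI.xt nr ns i - GQI.xt nr ns j) * (regInd nr ns i l - regInd nr ns j l)))))
    (fun i j => by rw [hA_symm.apply i j]; ring)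
    (fun i => by rw [hA_diag i]; ring)]
  -- step 3: pull out α⁻¹
  have hpull : ∑ i : Fin (nr + ns), ∑ j : Fin (nr + ns),
      (A i j / alphaW nr ns A * ((xiV nr k - 2⁻¹ * ((GQI.xt nr ns i - GQI.xt nr ns j) * (regInd nr ns i k - regInd nr ns j k))) *
        (xiV nr l - 2⁻¹ * ((GQI.xt nr ns i - GQI.xt nr ns j) * (regInd nr ns i l - regInd nr ns j l))))) =
      (∑ i : Fin (nr + ns), ∑ j : Fin (nr + ns), A i j * ((xiV nr k - 2⁻¹ * ((GQI.xt nr ns i - GQI.xt nr ns j) * (regInd nr ns i k - regInd nr ns j k))) *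
        (xiV nr l - 2⁻¹ * ((GQI.xt nr ns i - GQI.xt nr ns j) * (regInd nr ns i l - regInd nr ns j l))))) *
        (alphaW nr ns A)⁻¹ := by
    simp_rw [Finset.sum_mul]
    refine Finset.sum_congr rfl fun i _ => Finset.sum_congr rfl fun j _ => by ring
  rw [hpull]
  -- step 4: expansion of the double sum
  have hGG : ∀ i j : Fin (nr + ns), A i j * ((xiV nr k - 2⁻¹ * ((GQI.xt nr ns i - GQI.xt nr ns j) * (regInd nr ns i k - regInd nr ns j k))) *
        (xiV nr l - 2⁻¹ * ((GQI.xt nr ns i - GQI.xt nr ns j) * (regInd nr ns i l - regInd nr ns j l)))) =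
      A i j * (xiV nr k * xiV nr l)
      - (2⁻¹ * xiV nr l) * (A i j * ((GQI.xt nr ns i - GQI.xt nr ns j) *
          (regInd nr ns i k - regInd nr ns j k)))
      - (2⁻¹ * xiV nr k) * (A i j * ((GQI.xt nr ns i - GQI.xt nr ns j) *
          (regInd nr ns i l - regInd nr ns j l)))
      + 4⁻¹ * (A i j * ((GQI.xt nr ns i - GQI.xt nr ns j) ^ 2 *
          ((regInd nr ns i k - regInd nr ns j k) * (regInd nr ns i l - regInd nr ns j l)))) := by
    intro i j; ring
  have hS1 : ∑ i : Fin (nr + ns), ∑ j : Fin (nr + ns), A i j * (xiV nr k * xiV nr l) =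
      (2 * alphaW nr ns A) * (xiV nr k * xiV nr l) := by
    simp_rw [← Finset.sum_mul]
    rw [GQI.twoAlpha A hA_symm hA_diag]
  -- the RHS entry, unfolded
  simp only [Matrix.add_apply, Matrix.smul_apply, Matrix.sub_apply, Matrix.one_apply,
    Matrix.vecMulVec_apply, smul_eq_mul, etaV]
  subst hl1 hl2
  by_cases hkl : k = l
  · subst hkl
    have hmain : ∑ i : Fin (nr + ns), ∑ j : Fin (nr + ns), A i j * ((xiV nr k - 2⁻¹ * ((GQI.xt nr ns i - GQI.xt nr ns j) * (regInd nr ns i k - regInd nr ns j k))) *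
        (xiV nr k - 2⁻¹ * ((GQI.xt nr ns i - GQI.xt nr ns j) * (regInd nr ns i k - regInd nr ns j k)))) =
        (2 * alphaW nr ns A) * (xiV nr k * xiV nr k)
          - (2⁻¹ * xiV nr k) * (2 * ((ldr * nr + ls) * xiV nr k))
          - (2⁻¹ * xiV nr k) * (2 * ((ldr * nr + ls) * xiV nr k))
          + 4⁻¹ * (2 * (2 * ldr + ls * ((nr : ℝ))⁻¹)) := by
      simp only [hGG, Finset.sum_sub_distrib, Finset.sum_add_distrib, ← Finset.mul_sum]
      rw [hS1, GQI.sumC A hA_symm k, GQI.sumUdiag A hA_symm hA_diag k, hrowXi k, hrowXiSq k]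
    rw [hmain, if_pos rfl]
    by_cases hk : (k : ℕ) < nr / 2
    · have hxk : xiV nr k = 1 / Real.sqrt nr := by simp [xiV, hk]
      rw [hxk]
      set s := Real.sqrt (nr : ℝ) with hs
      rw [hnrs]
      rw [hαdef]
      field_simp
      ring
    · have hxk : xiV nr k = -1 / Real.sqrt nr := by simp [xiV, hk]
      rw [hxk]
      set s := Real.sqrt (nr : ℝ) with hs
      rw [hnrs]
      rw [hαdef]
      field_simp
      ring
  · have hmain : ∑ i : Fin (nr + ns), ∑ j : Fin (nr + ns), A i j *
        ((xiV nr k - 2⁻¹ * ((GQI.xt nr ns i - GQI.xt nr ns j) *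
          (regInd nr ns i k - regInd nr ns j k))) *
        (xiV nr l - 2⁻¹ * ((GQI.xt nr ns i - GQI.xt nr ns j) *
          (regInd nr ns i l - regInd nr ns j l)))) =
        (2 * alphaW nr ns A) * (xiV nr k * xiV nr l)
          - (2⁻¹ * xiV nr l) * (2 * ((ldr * nr + ls) * xiV nr k))
          - (2⁻¹ * xiV nr k) * (2 * ((ldr * nr + ls) * xiV nr l))
          + 4⁻¹ * (-2 * (A (Fin.castAdd ns k) (Fin.castAdd ns l) *
              (xiV nr k - xiV nr l) ^ 2)) := by
      simp only [hGG, Finset.sum_sub_distrib, Finset.sum_add_distrib, ← Finset.mul_sum]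
      rw [hS1, GQI.sumC A hA_symm k, GQI.sumC A hA_symm l, GQI.sumUoff A hA_symm k l hkl,
        hrowXi k, hrowXi l]
    rw [hmain, if_neg hkl]
    by_cases hk : (k : ℕ) < nr / 2 <;> by_cases hl : (l : ℕ) < nr / 2
    · have hxk : xiV nr k = 1 / Real.sqrt nr := by simp [xiV, hk]
      have hxl : xiV nr l = 1 / Real.sqrt nr := by simp [xiV, hl]
      rw [hxk, hxl]
      set s := Real.sqrt (nr : ℝ) with hs
      rw [hnrs]
      rw [hαdef]
      field_simp
      ring
    · have hAkl : A (Fin.castAdd ns k) (Fin.castAdd ns l) = ldr :=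
        hA_diff _ _ (by simpa using k.isLt) (by simpa using l.isLt) (by simp [hk, hl])
      have hxk : xiV nr k = 1 / Real.sqrt nr := by simp [xiV, hk]
      have hxl : xiV nr l = -1 / Real.sqrt nr := by simp [xiV, hl]
      rw [hAkl, hxk, hxl]
      set s := Real.sqrt (nr : ℝ) with hs
      rw [hnrs]
      rw [hαdef]
      field_simp
      ring
    · have hAkl : A (Fin.castAdd ns k) (Fin.castAdd ns l) = ldr :=
        hA_diff _ _ (by simpa using k.isLt) (by simpa using l.isLt) (by simp [hk, hl])
      have hxk : xiV nr k = -1 / Real.sqrt nr := by simp [xiV, hk]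
      have hxl : xiV nr l = 1 / Real.sqrt nr := by simp [xiV, hl]
      rw [hAkl, hxk, hxl]
      set s := Real.sqrt (nr : ℝ) with hs
      rw [hnrs]
      rw [hαdef]
      field_simp
      ring
    · have hxk : xiV nr k = -1 / Real.sqrt nr := by simp [xiV, hk]
      have hxl : xiV nr l = -1 / Real.sqrt nr := by simp [xiV, hl]
      rw [hxk, hxl]
      set s := Real.sqrt (nr : ℝ) with hs
      rw [hnrs]
      rw [hαdef]
      field_simp
      ring

end
end

section
/- Under the gossip model setup with l^{(s)} > 0, for every t ∈ ℕ the product of update matrices satisfies E{‖Q(0)Q(1)⋯Q(t)‖₁} ≤ (r0 n)^{3/2}·(1 − λ1)^{t+1}, where ‖·‖₁ denotes the maximum absolute column sum norm on ℝ^{r0 n × r0 n}. -/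
open MeasureTheory ProbabilityTheory Matrix Finset Filter

set_option autoImplicit false
set_option linter.unusedVariables false

noncomputable section

/-- #{i : |x_i - y_i| > ε c_x}. -/
lemma sum_indic' (N m : ℕ) (c : ℝ) :
    (∑ j : Fin N, if (j : ℕ) = m then c else 0) = if m < N then c else 0 := by
  rcases lt_or_ge m N with h | h
  · rw [if_pos h, Finset.sum_eq_single (⟨m, h⟩ : Fin N)]
    · simp
    · intro b _ hb
      rw [if_neg]
      intro hb'
      exact hb (Fin.ext hb')
    · simp
  · rw [if_neg (not_lt.mpr h)]
    refine Finset.sum_eq_zero fun j _ => ?_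
    rw [if_neg]
    intro hj
    exact absurd (hj ▸ j.isLt) (not_lt.mpr h)

lemma Qmat_apply (nr ns : ℕ) (e : Fin (nr + ns) × Fin (nr + ns)) (i j : Fin nr) :
    Qmat nr ns e i j = (if i = j then (1:ℝ) else 0)
      - 2⁻¹ * (((if (i:ℕ) = (e.1:ℕ) then (1:ℝ) else 0) - (if (i:ℕ) = (e.2:ℕ) then 1 else 0))
        * ((if (j:ℕ) = (e.1:ℕ) then (1:ℝ) else 0) - (if (j:ℕ) = (e.2:ℕ) then 1 else 0))) := by
  simp [Qmat, regInd, Matrix.sub_apply, Matrix.smul_apply, Matrix.vecMulVec_apply,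
    Matrix.one_apply, Pi.sub_apply, smul_eq_mul]

lemma Qmat_nonneg {nr ns : ℕ} {e : Fin (nr + ns) × Fin (nr + ns)} (hne : (e.1:ℕ) ≠ (e.2:ℕ))
    (i j : Fin nr) : 0 ≤ Qmat nr ns e i j := by
  rw [Qmat_apply]
  rcases eq_or_ne i j with rfl | hij
  · rw [if_pos rfl]
    split_ifs <;> first | (exfalso; omega) | norm_num
  · rw [if_neg hij]
    have hij' : (i : ℕ) ≠ (j : ℕ) := fun h => hij (Fin.ext h)
    split_ifs <;> first | (exfalso; omega) | norm_num

lemma Qmat_rowsum {nr ns : ℕ} {e : Fin (nr + ns) × Fin (nr + ns)} (hlt : (e.1:ℕ) < (e.2:ℕ))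
    (k : Fin nr) :
    (∑ j, Qmat nr ns e k j)
      = 1 - (if (e.1:ℕ) = (k:ℕ) ∧ nr ≤ (e.2:ℕ) then (2⁻¹:ℝ) else 0) := by
  have hk := k.isLt
  have key : (∑ j : Fin nr, Qmat nr ns e k j)
      = 1 - 2⁻¹ * (((if (k:ℕ) = (e.1:ℕ) then (1:ℝ) else 0) - (if (k:ℕ) = (e.2:ℕ) then 1 else 0))
          * ((if (e.1:ℕ) < nr then (1:ℝ) else 0) - (if (e.2:ℕ) < nr then 1 else 0))) := by
    simp only [Qmat_apply]
    rw [Finset.sum_sub_distrib, ← Finset.mul_sum, ← Finset.mul_sum]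
    congr 1
    · simp
    · congr 2
      rw [Finset.sum_sub_distrib, sum_indic', sum_indic']
  rw [key]
  split_ifs <;> first | (exfalso; omega) | norm_num

lemma list_prod_nonneg {nr : ℕ} (L : List (Matrix (Fin nr) (Fin nr) ℝ))
    (h : ∀ M ∈ L, ∀ i j, 0 ≤ M i j) : ∀ i j, 0 ≤ L.prod i j := by
  induction L with
  | nil =>
    intro i j
    rw [List.prod_nil]
    rcases eq_or_ne i j with rfl | hij
    · simp [Matrix.one_apply]
    · simp [Matrix.one_apply, hij]
  | cons M L ih =>
    intro i j
    rw [List.prod_cons, Matrix.mul_apply]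
    exact Finset.sum_nonneg fun k _ => mul_nonneg (h M (List.mem_cons_self) i k)
      (ih (fun N hN => h N (List.mem_cons_of_mem _ hN)) k j)

lemma integrable_comp_finite {Ω : Type} [MeasurableSpace Ω] (P : Measure Ω) [IsFiniteMeasure P]
    {E : Type*} [Fintype E] [MeasurableSpace E] [MeasurableSingletonClass E]
    {X : Ω → E} (hX : Measurable X) (g : E → ℝ) :
    Integrable (fun ω => g (X ω)) P := by
  haveI : IsFiniteMeasure (P.map X) := Measure.isFiniteMeasure_map P X
  have h : Integrable g (P.map X) := .of_finite
  exact (integrable_map_measure (measurable_of_countable g).aestronglyMeasurable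
    hX.aemeasurable).mp h

lemma exp_comp_finite {Ω : Type} [MeasurableSpace Ω] (P : Measure Ω) [IsFiniteMeasure P]
    {E : Type*} [Fintype E] [MeasurableSpace E] [MeasurableSingletonClass E]
    {X : Ω → E} (hX : Measurable X) (g : E → ℝ) :
    ∫ ω, g (X ω) ∂P = ∑ e, (P {ω | X ω = e}).toReal * g e := by
  haveI : IsFiniteMeasure (P.map X) := Measure.isFiniteMeasure_map P X
  rw [← integral_map hX.aemeasurable (measurable_of_countable g).aestronglyMeasurable,
    integral_fintype .of_finite]
  refine Finset.sum_congr rfl fun e _ => ?_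
  rw [Measure.real, Measure.map_apply hX (measurableSet_singleton e), smul_eq_mul]
  rfl

theorem gossip_product_column_norm_bound
    (nr ns : ℕ) (hnr_even : Even nr) (hnr_pos : 0 < nr) (hns_pos : 0 < ns)
    (A : Matrix (Fin (nr + ns)) (Fin (nr + ns)) ℝ)
    (hA_symm : A.IsSymm) (hA_diag : ∀ i, A i i = 0)
    (lsr ldr ls : ℝ)
    (hlsr : lsr ∈ Set.Ioo (0 : ℝ) 1) (hldr : ldr ∈ Set.Ioo (0 : ℝ) 1)
    (hls_nonneg : 0 ≤ ls)
    (hA_same : ∀ i j : Fin (nr + ns), i ≠ j → (i : ℕ) < nr → (j : ℕ) < nr →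
      (((i : ℕ) < nr / 2) ↔ ((j : ℕ) < nr / 2)) → A i j = lsr)
    (hA_diff : ∀ i j : Fin (nr + ns), (i : ℕ) < nr → (j : ℕ) < nr →
      ¬(((i : ℕ) < nr / 2) ↔ ((j : ℕ) < nr / 2)) → A i j = ldr)
    (hA_stub : ∀ i j : Fin (nr + ns), (i : ℕ) < nr → nr ≤ (j : ℕ) →
      A i j ∈ Set.Ico (0 : ℝ) 1)
    (hA_ss : ∀ i j : Fin (nr + ns), nr ≤ (i : ℕ) → nr ≤ (j : ℕ) → A i j = 0)
    (hA_rowsum : ∀ i : Fin (nr + ns), (i : ℕ) < nr →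
      (∑ j ∈ Finset.univ.filter (fun j : Fin (nr + ns) => nr ≤ (j : ℕ)), A i j) = ls)
    (Ω : Type) [MeasurableSpace Ω] (P : Measure Ω) [IsProbabilityMeasure P]
    (edge : ℕ → Ω → Fin (nr + ns) × Fin (nr + ns))
    (hmeas : ∀ t, Measurable (edge t))
    (hlt : ∀ t ω, (edge t ω).1 < (edge t ω).2)
    (hdist : ∀ (t : ℕ) (i j : Fin (nr + ns)), i < j →
      P {ω | edge t ω = (i, j)} = ENNReal.ofReal (A i j / alphaW nr ns A))
    (hindep : iIndepFun edge P)
    (hls_pos : 0 < ls)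
    (l1 : ℝ) (hl1 : l1 = ls / (2 * alphaW nr ns A))
    :
    ∀ t : ℕ,
      (∫ ω, ⨆ j : Fin nr, ∑ i : Fin nr,
          |(((List.range (t + 1)).map fun s => Qmat nr ns (edge s ω)).prod) i j| ∂P) ≤
        (nr : ℝ) ^ ((3 : ℝ) / 2) * (1 - l1) ^ (t + 1) := by

  intro t
  haveI : Nonempty (Fin nr) := ⟨⟨0, hnr_pos⟩⟩
  -- nonnegativity of A
  have hA_nonneg : ∀ i j : Fin (nr + ns), 0 ≤ A i j := by
    intro i j
    rcases eq_or_ne i j with rfl | hij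
    · exact (hA_diag i).ge
    rcases lt_or_ge (i : ℕ) nr with hi | hi
    · rcases lt_or_ge (j : ℕ) nr with hj | hj
      · by_cases hc : ((i : ℕ) < nr / 2) ↔ ((j : ℕ) < nr / 2)
        · rw [hA_same i j hij hi hj hc]; exact hlsr.1.le
        · rw [hA_diff i j hi hj hc]; exact hldr.1.le
      · exact (hA_stub i j hi hj).1
    · rcases lt_or_ge (j : ℕ) nr with hj | hj
      · have h1 := congrFun (congrFun hA_symm j) i
        rw [Matrix.transpose_apply] at h1
        rw [h1]; exact (hA_stub j i hj hi).1
      · rw [hA_ss i j hi hj]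
  set α := alphaW nr ns A with hα
  have hls_le : ls ≤ α := by
    have hi0 : (0 : ℕ) < nr + ns := by omega
    have h1 : ls = ∑ j : Fin (nr + ns), if nr ≤ (j : ℕ) then A ⟨0, hi0⟩ j else 0 := by
      rw [← hA_rowsum ⟨0, hi0⟩ hnr_pos, Finset.sum_filter]
    have h2 : (∑ j : Fin (nr + ns), if nr ≤ (j : ℕ) then A ⟨0, hi0⟩ j else 0)
        ≤ ∑ j : Fin (nr + ns), if ((⟨0, hi0⟩ : Fin (nr + ns)) : ℕ) < (j : ℕ)
            then A ⟨0, hi0⟩ j else 0 := by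
      refine Finset.sum_le_sum fun j _ => ?_
      by_cases h : nr ≤ (j : ℕ)
      · rw [if_pos h, if_pos (show (0 : ℕ) < (j : ℕ) by omega)]
      · rw [if_neg h]; split_ifs
        exacts [hA_nonneg _ _, le_rfl]
    have h3 : (∑ j : Fin (nr + ns), if ((⟨0, hi0⟩ : Fin (nr + ns)) : ℕ) < (j : ℕ)
          then A ⟨0, hi0⟩ j else 0) ≤ α := by
      rw [hα]; unfold alphaW
      refine Finset.single_le_sum
        (f := fun i : Fin (nr + ns) => ∑ j : Fin (nr + ns), if (i : ℕ) < (j : ℕ) then A i j else 0)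
        (fun i _ => Finset.sum_nonneg fun j _ => ?_) (Finset.mem_univ _)
      split_ifs
      exacts [hA_nonneg _ _, le_rfl]
    linarith
  have hαpos : 0 < α := lt_of_lt_of_le hls_pos hls_le
  have hl1_nonneg : 0 ≤ l1 := by
    rw [hl1]; positivity
  have hl1_le : l1 ≤ 1 := by
    rw [hl1, div_le_one (by linarith)]; linarith
  -- expectation of a row sum of Q
  have hexp : ∀ (s : ℕ) (k : Fin nr),
      ∫ ω, (∑ j, Qmat nr ns (edge s ω) k j) ∂P = 1 - l1 := by
    intro s k
    have hk := k.isLt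
    rw [exp_comp_finite P (hmeas s) (fun e => ∑ j, Qmat nr ns e k j)]
    have hp : ∀ e : Fin (nr + ns) × Fin (nr + ns),
        (P {ω | edge s ω = e}).toReal * (∑ j, Qmat nr ns e k j)
        = (if (e.1 : ℕ) < (e.2 : ℕ) then A e.1 e.2 / α else 0)
          - (if (e.1 : ℕ) = (k : ℕ) ∧ nr ≤ (e.2 : ℕ) then A e.1 e.2 / α * 2⁻¹ else 0) := by
      rintro ⟨e1, e2⟩
      by_cases h : (e1 : ℕ) < (e2 : ℕ)
      · have hPe : (P {ω | edge s ω = (e1, e2)}).toReal = A e1 e2 / α := by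
          rw [hdist s e1 e2 (Fin.lt_def.mpr h),
            ENNReal.toReal_ofReal (div_nonneg (hA_nonneg _ _) hαpos.le)]
        rw [hPe, if_pos h, Qmat_rowsum h k, mul_sub, mul_one]
        congr 1
        by_cases h2 : (e1 : ℕ) = (k : ℕ) ∧ nr ≤ (e2 : ℕ)
        · rw [if_pos h2, if_pos h2]
        · rw [if_neg h2, if_neg h2, mul_zero]
      · have hempty : {ω | edge s ω = (e1, e2)} = (∅ : Set Ω) := by
          ext ω
          simp only [Set.mem_setOf_eq, Set.mem_empty_iff_false, iff_false]
          intro he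
          have h2 := hlt s ω
          rw [he] at h2
          exact h (Fin.lt_def.mp h2)
        rw [hempty, measure_empty, ENNReal.toReal_zero, zero_mul, if_neg h, if_neg, zero_sub,
          neg_zero]
        rintro ⟨h1, h2⟩
        dsimp only at h1 h2
        omega
    simp only [hp]
    rw [Finset.sum_sub_distrib]
    have hS1 : (∑ e : Fin (nr + ns) × Fin (nr + ns),
        if (e.1 : ℕ) < (e.2 : ℕ) then A e.1 e.2 / α else 0) = 1 := by
      have h4 : ∀ e : Fin (nr + ns) × Fin (nr + ns),
          (if (e.1 : ℕ) < (e.2 : ℕ) then A e.1 e.2 / α else 0)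
          = (if (e.1 : ℕ) < (e.2 : ℕ) then A e.1 e.2 else 0) / α := by
        intro e; split_ifs <;> simp
      rw [Finset.sum_congr rfl fun e _ => h4 e, ← Finset.sum_div, Fintype.sum_prod_type]
      rw [show (∑ i : Fin (nr + ns), ∑ j : Fin (nr + ns),
        if (i : ℕ) < (j : ℕ) then A i j else 0) = α from by rw [hα]; rfl]
      exact div_self hαpos.ne'
    have hS2 : (∑ e : Fin (nr + ns) × Fin (nr + ns),
        if (e.1 : ℕ) = (k : ℕ) ∧ nr ≤ (e.2 : ℕ) then A e.1 e.2 / α * 2⁻¹ else 0) = l1 := by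
      rw [Fintype.sum_prod_type]
      have hinner : ∀ i : Fin (nr + ns),
          (∑ j : Fin (nr + ns), if (i : ℕ) = (k : ℕ) ∧ nr ≤ (j : ℕ)
            then A i j / α * 2⁻¹ else 0)
          = if (i : ℕ) = (k : ℕ) then ls / α * 2⁻¹ else 0 := by
        intro i
        by_cases h : (i : ℕ) = (k : ℕ)
        · rw [if_pos h]
          have hi : (i : ℕ) < nr := h ▸ hk
          have h5 : ∀ j : Fin (nr + ns),
              (if (i : ℕ) = (k : ℕ) ∧ nr ≤ (j : ℕ) then A i j / α * 2⁻¹ else 0)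
              = (if nr ≤ (j : ℕ) then A i j else 0) / α * 2⁻¹ := by
            intro j
            by_cases hj : nr ≤ (j : ℕ)
            · rw [if_pos ⟨h, hj⟩, if_pos hj]
            · rw [if_neg (by tauto), if_neg hj, zero_div, zero_mul]
          rw [Finset.sum_congr rfl fun j _ => h5 j, ← Finset.sum_mul, ← Finset.sum_div,
            ← Finset.sum_filter, hA_rowsum i hi]
        · rw [if_neg h]
          exact Finset.sum_eq_zero fun j _ => if_neg (by tauto)
      rw [Finset.sum_congr rfl fun i _ => hinner i, sum_indic' (nr + ns) (k : ℕ) (ls / α * 2⁻¹),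
        if_pos (show (k : ℕ) < nr + ns by omega), hl1]
      field_simp
    rw [hS1, hS2]
  -- measurability of tuples, generic integrability
  have hXmeas : ∀ m : ℕ, Measurable (fun ω => fun i : Fin m => edge (i : ℕ) ω) :=
    fun m => measurable_pi_lambda _ fun i => hmeas (i : ℕ)
  have hintg : ∀ (m : ℕ) (g : (Fin (m + 1) → Fin (nr + ns) × Fin (nr + ns)) → ℝ),
      Integrable (fun ω => g (fun i => edge (i : ℕ) ω)) P :=
    fun m g => integrable_comp_finite P (hXmeas (m + 1)) g
  have hlist : ∀ (m : ℕ) (ω : Ω),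
      ((List.range (m + 1)).map fun s => Qmat nr ns (edge s ω)).prod
        = ((List.finRange (m + 1)).map fun s : Fin (m + 1) =>
            Qmat nr ns (edge (s : ℕ) ω)).prod := by
    intro m ω
    have hfr : (List.finRange (m + 1)).map (fun s : Fin (m + 1) => (s : ℕ)) = List.range (m + 1) :=
      List.ext_getElem (by simp) (by simp)
    rw [← hfr, List.map_map]
    rfl
  have hQnn : ∀ (s : ℕ) (ω : Ω) (i j : Fin nr), 0 ≤ Qmat nr ns (edge s ω) i j :=
    fun s ω => Qmat_nonneg (fun h => (ne_of_lt (hlt s ω)) (Fin.ext h))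
  have hPnn : ∀ (m : ℕ) (ω : Ω) (i j : Fin nr),
      0 ≤ ((List.range (m + 1)).map fun s => Qmat nr ns (edge s ω)).prod i j := by
    intro m ω
    refine list_prod_nonneg _ ?_
    intro M hM i j
    simp only [List.mem_map, List.mem_range] at hM
    obtain ⟨s, -, rfl⟩ := hM
    exact hQnn s ω i j
  -- main induction
  have hmain : ∀ m : ℕ,
      (∫ ω, (∑ i : Fin nr, ∑ j : Fin nr,
        ((List.range (m + 1)).map fun s => Qmat nr ns (edge s ω)).prod i j) ∂P)
      = (nr : ℝ) * (1 - l1) ^ (m + 1) := by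
    intro m
    induction m with
    | zero =>
      have h0 : ∀ ω, ((List.range (0 + 1)).map fun s => Qmat nr ns (edge s ω)).prod
          = Qmat nr ns (edge 0 ω) := by
        intro ω; simp [List.range_succ]
      calc (∫ ω, (∑ i : Fin nr, ∑ j : Fin nr,
              ((List.range (0 + 1)).map fun s => Qmat nr ns (edge s ω)).prod i j) ∂P)
          = ∫ ω, (∑ i : Fin nr, ∑ j : Fin nr, Qmat nr ns (edge 0 ω) i j) ∂P := by
            refine integral_congr_ae (Filter.Eventually.of_forall fun ω => ?_)
            dsimp only
            rw [h0]
        _ = ∑ i : Fin nr, ∫ ω, (∑ j, Qmat nr ns (edge 0 ω) i j) ∂P :=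
            integral_finset_sum _ fun i _ =>
              integrable_comp_finite P (hmeas 0) (fun e => ∑ j, Qmat nr ns e i j)
        _ = ∑ _i : Fin nr, (1 - l1) := Finset.sum_congr rfl fun i _ => hexp 0 i
        _ = (nr : ℝ) * (1 - l1) ^ (0 + 1) := by
            simp [Finset.sum_const, Finset.card_univ, nsmul_eq_mul]; ring
    | succ m ih =>
      have hstep : ∀ ω, ((List.range (m + 1 + 1)).map fun s => Qmat nr ns (edge s ω)).prod
          = ((List.range (m + 1)).map fun s => Qmat nr ns (edge s ω)).prod
            * Qmat nr ns (edge (m + 1) ω) := by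
        intro ω
        rw [List.range_succ, List.map_append, List.prod_append]
        simp
      have hsplit : ∀ ω, (∑ i : Fin nr, ∑ j : Fin nr,
          ((List.range (m + 1 + 1)).map fun s => Qmat nr ns (edge s ω)).prod i j)
          = ∑ k : Fin nr,
              (∑ i, ((List.finRange (m + 1)).map fun s : Fin (m + 1) =>
                Qmat nr ns (edge (s : ℕ) ω)).prod i k)
              * (∑ j, Qmat nr ns (edge (m + 1) ω) k j) := by
        intro ω
        simp only [hstep, Matrix.mul_apply, ← hlist m ω, Finset.sum_mul, Finset.mul_sum]
        calc (∑ i : Fin nr, ∑ j : Fin nr, ∑ k : Fin nr,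
                ((List.range (m + 1)).map fun s => Qmat nr ns (edge s ω)).prod i k
                  * Qmat nr ns (edge (m + 1) ω) k j)
            = ∑ i : Fin nr, ∑ k : Fin nr, ∑ j : Fin nr,
                ((List.range (m + 1)).map fun s => Qmat nr ns (edge s ω)).prod i k
                  * Qmat nr ns (edge (m + 1) ω) k j :=
              Finset.sum_congr rfl fun i _ => Finset.sum_comm
          _ = ∑ k : Fin nr, ∑ i : Fin nr, ∑ j : Fin nr,
                ((List.range (m + 1)).map fun s => Qmat nr ns (edge s ω)).prod i k
                  * Qmat nr ns (edge (m + 1) ω) k j := Finset.sum_comm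
          _ = ∑ k : Fin nr, ∑ j : Fin nr, ∑ i : Fin nr,
                ((List.range (m + 1)).map fun s => Qmat nr ns (edge s ω)).prod i k
                  * Qmat nr ns (edge (m + 1) ω) k j :=
              Finset.sum_congr rfl fun k _ => Finset.sum_comm
      have hC : ∀ k : Fin nr, Integrable (fun ω =>
          ∑ i, ((List.finRange (m + 1)).map fun s : Fin (m + 1) =>
            Qmat nr ns (edge (s : ℕ) ω)).prod i k) P :=
        fun k => hintg m (fun v =>
          ∑ i, ((List.finRange (m + 1)).map fun s => Qmat nr ns (v s)).prod i k)
      have hD : ∀ k : Fin nr, Integrable (fun ω =>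
          ∑ j, Qmat nr ns (edge (m + 1) ω) k j) P :=
        fun k => integrable_comp_finite P (hmeas (m + 1)) (fun e => ∑ j, Qmat nr ns e k j)
      have hSdisj : Disjoint (Finset.range (m + 1)) ({m + 1} : Finset ℕ) := by simp
      have hInd0 := hindep.indepFun_finset (Finset.range (m + 1)) {m + 1} hSdisj hmeas
      have hIndk : ∀ k : Fin nr, IndepFun
          (fun ω => ∑ i, ((List.finRange (m + 1)).map fun s : Fin (m + 1) =>
            Qmat nr ns (edge (s : ℕ) ω)).prod i k)
          (fun ω => ∑ j, Qmat nr ns (edge (m + 1) ω) k j) P := by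
        intro k
        exact hInd0.comp
          (measurable_of_countable (fun v : (Finset.range (m + 1) : Finset ℕ) →
              Fin (nr + ns) × Fin (nr + ns) =>
            ∑ i, ((List.finRange (m + 1)).map fun s : Fin (m + 1) =>
              Qmat nr ns (v ⟨(s : ℕ), Finset.mem_range.mpr s.isLt⟩)).prod i k))
          (measurable_of_countable (fun v : ({m + 1} : Finset ℕ) →
              Fin (nr + ns) × Fin (nr + ns) =>
            ∑ j, Qmat nr ns (v ⟨m + 1, Finset.mem_singleton_self _⟩) k j))
      calc (∫ ω, (∑ i : Fin nr, ∑ j : Fin nr,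
              ((List.range (m + 1 + 1)).map fun s => Qmat nr ns (edge s ω)).prod i j) ∂P)
          = ∫ ω, (∑ k : Fin nr,
              (∑ i, ((List.finRange (m + 1)).map fun s : Fin (m + 1) =>
                Qmat nr ns (edge (s : ℕ) ω)).prod i k)
              * (∑ j, Qmat nr ns (edge (m + 1) ω) k j)) ∂P := by
            refine integral_congr_ae (Filter.Eventually.of_forall fun ω => ?_)
            exact hsplit ω
        _ = ∑ k : Fin nr, ∫ ω,
              ((∑ i, ((List.finRange (m + 1)).map fun s : Fin (m + 1) =>
                Qmat nr ns (edge (s : ℕ) ω)).prod i k)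
              * (∑ j, Qmat nr ns (edge (m + 1) ω) k j)) ∂P :=
            integral_finset_sum _ fun k _ => (hIndk k).integrable_mul (hC k) (hD k)
        _ = ∑ k : Fin nr,
              (∫ ω, (∑ i, ((List.finRange (m + 1)).map fun s : Fin (m + 1) =>
                Qmat nr ns (edge (s : ℕ) ω)).prod i k) ∂P) * (1 - l1) := by
            refine Finset.sum_congr rfl fun k _ => ?_
            have hm := (hIndk k).integral_mul_eq_mul_integral (hC k).aestronglyMeasurable (hD k).aestronglyMeasurable
            rw [show (∫ ω, ((∑ i, ((List.finRange (m + 1)).map fun s : Fin (m + 1) =>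
                Qmat nr ns (edge (s : ℕ) ω)).prod i k)
              * (∑ j, Qmat nr ns (edge (m + 1) ω) k j)) ∂P)
              = (∫ ω, (∑ i, ((List.finRange (m + 1)).map fun s : Fin (m + 1) =>
                Qmat nr ns (edge (s : ℕ) ω)).prod i k) ∂P)
                * ∫ ω, (∑ j, Qmat nr ns (edge (m + 1) ω) k j) ∂P from hm, hexp (m + 1) k]
        _ = (1 - l1) * ∑ k : Fin nr,
              ∫ ω, (∑ i, ((List.finRange (m + 1)).map fun s : Fin (m + 1) =>
                Qmat nr ns (edge (s : ℕ) ω)).prod i k) ∂P := by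
            rw [← Finset.sum_mul, mul_comm]
        _ = (1 - l1) * ∫ ω, (∑ k : Fin nr,
              ∑ i, ((List.finRange (m + 1)).map fun s : Fin (m + 1) =>
                Qmat nr ns (edge (s : ℕ) ω)).prod i k) ∂P := by
            rw [integral_finset_sum _ fun k _ => hC k]
        _ = (1 - l1) * ∫ ω, (∑ i : Fin nr, ∑ j : Fin nr,
              ((List.range (m + 1)).map fun s => Qmat nr ns (edge s ω)).prod i j) ∂P := by
            congr 1
            refine integral_congr_ae (Filter.Eventually.of_forall fun ω => ?_)
            dsimp only
            rw [← hlist m ω]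
            exact Finset.sum_comm
        _ = (1 - l1) * ((nr : ℝ) * (1 - l1) ^ (m + 1)) := by rw [ih]
        _ = (nr : ℝ) * (1 - l1) ^ (m + 1 + 1) := by ring
  -- pointwise bound
  have hfinal_pt : ∀ ω, (⨆ j : Fin nr, ∑ i : Fin nr,
      |((List.range (t + 1)).map fun s => Qmat nr ns (edge s ω)).prod i j|)
      ≤ ∑ i : Fin nr, ∑ j : Fin nr,
          ((List.range (t + 1)).map fun s => Qmat nr ns (edge s ω)).prod i j := by
    intro ω
    refine ciSup_le fun j0 => ?_
    have h1 : (∑ i : Fin nr,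
        |((List.range (t + 1)).map fun s => Qmat nr ns (edge s ω)).prod i j0|)
        = ∑ i : Fin nr, ((List.range (t + 1)).map fun s => Qmat nr ns (edge s ω)).prod i j0 :=
      Finset.sum_congr rfl fun i _ => abs_of_nonneg (hPnn t ω i j0)
    rw [h1]
    calc (∑ i : Fin nr, ((List.range (t + 1)).map fun s => Qmat nr ns (edge s ω)).prod i j0)
        ≤ ∑ j : Fin nr, ∑ i : Fin nr,
            ((List.range (t + 1)).map fun s => Qmat nr ns (edge s ω)).prod i j :=
          Finset.single_le_sum (f := fun j => ∑ i : Fin nr,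
            ((List.range (t + 1)).map fun s => Qmat nr ns (edge s ω)).prod i j)
            (fun j _ => Finset.sum_nonneg fun i _ => hPnn t ω i j) (Finset.mem_univ j0)
      _ = ∑ i : Fin nr, ∑ j : Fin nr,
            ((List.range (t + 1)).map fun s => Qmat nr ns (edge s ω)).prod i j :=
          Finset.sum_comm
  -- integrability
  have hfun1 : (fun ω => ⨆ j : Fin nr, ∑ i : Fin nr,
      |((List.range (t + 1)).map fun s => Qmat nr ns (edge s ω)).prod i j|)
      = fun ω => ⨆ j : Fin nr, ∑ i : Fin nr,
      |((List.finRange (t + 1)).map fun s : Fin (t + 1) =>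
          Qmat nr ns (edge (s : ℕ) ω)).prod i j| := by
    funext ω; rw [hlist t ω]
  have hfun2 : (fun ω => ∑ i : Fin nr, ∑ j : Fin nr,
      ((List.range (t + 1)).map fun s => Qmat nr ns (edge s ω)).prod i j)
      = fun ω => ∑ i : Fin nr, ∑ j : Fin nr,
      ((List.finRange (t + 1)).map fun s : Fin (t + 1) =>
          Qmat nr ns (edge (s : ℕ) ω)).prod i j := by
    funext ω; rw [hlist t ω]
  have hIL : Integrable (fun ω => ⨆ j : Fin nr, ∑ i : Fin nr,
      |((List.range (t + 1)).map fun s => Qmat nr ns (edge s ω)).prod i j|) P := by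
    rw [hfun1]
    exact hintg t (fun v => ⨆ j : Fin nr, ∑ i : Fin nr,
      |((List.finRange (t + 1)).map fun s => Qmat nr ns (v s)).prod i j|)
  have hIR : Integrable (fun ω => ∑ i : Fin nr, ∑ j : Fin nr,
      ((List.range (t + 1)).map fun s => Qmat nr ns (edge s ω)).prod i j) P := by
    rw [hfun2]
    exact hintg t (fun v => ∑ i : Fin nr, ∑ j : Fin nr,
      ((List.finRange (t + 1)).map fun s => Qmat nr ns (v s)).prod i j)
  have hnr32 : (nr : ℝ) ≤ (nr : ℝ) ^ ((3 : ℝ) / 2) := by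
    have h1 : (1 : ℝ) ≤ (nr : ℝ) := by exact_mod_cast hnr_pos
    calc (nr : ℝ) = (nr : ℝ) ^ (1 : ℝ) := (Real.rpow_one _).symm
      _ ≤ (nr : ℝ) ^ ((3 : ℝ) / 2) :=
        Real.rpow_le_rpow_of_exponent_le h1 (by norm_num)
  calc (∫ ω, ⨆ j : Fin nr, ∑ i : Fin nr,
        |(((List.range (t + 1)).map fun s => Qmat nr ns (edge s ω)).prod) i j| ∂P)
      ≤ ∫ ω, (∑ i : Fin nr, ∑ j : Fin nr,
          ((List.range (t + 1)).map fun s => Qmat nr ns (edge s ω)).prod i j) ∂P :=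
        integral_mono hIL hIR hfinal_pt
    _ = (nr : ℝ) * (1 - l1) ^ (t + 1) := hmain t
    _ ≤ (nr : ℝ) ^ ((3 : ℝ) / 2) * (1 - l1) ^ (t + 1) :=
        mul_le_mul_of_nonneg_right hnr32 (pow_nonneg (by linarith) _)


end
end
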